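/- arXiv:2104.05172 — 10 statements merged into one kernel-verified Lean document; each statement's English description precedes it below -/
import Mathlib

section
/- Let p, k, c, n be positive integers with c ≥ 2, p ≤ k ≤ n, and k/(p·e^c) ≥ 2. Against every adaptive deterministic emptier, the (p,k,c)-filling strategy guarantees: with probability at least k^{−k} over the filler's random choices, after the final step of the strategy at least k/(2e^c) cups each contain at least c/2 units of water. -/
open scoped ENNReal

/-- The `(p,k,c)`-filling strategy against an adaptive deterministic emptier `E`.
The state is (remaining steps, current set `S` of active cups, history of random
deletion sets, current fills).  In each step the filler places `p/|S|` water into every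
cup of `S`; the emptier (a deterministic function of the history) removes up to `E hist j`
water from each cup `j` (fills never go below `0`); then `p` distinct cups, chosen
uniformly at random, are deleted from `S` and recorded in the history. -/
noncomputable def pkcGame (n p : ℕ) (E : List (Finset (Fin n)) → Fin n → ℝ) :
    ℕ → Finset (Fin n) → List (Finset (Fin n)) → (Fin n → ℝ) → PMF (Fin n → ℝ)
  | 0, _, _, g => PMF.pure g
  | steps + 1, S, hist, g =>
    if h : (Finset.powersetCard p S).Nonempty then
      (PMF.uniformOfFinset _ h).bind fun D =>
        pkcGame n p E steps (S \ D) (hist ++ [D])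
          (fun j => max ((g j + if j ∈ S then (p : ℝ) / (S.card : ℝ) else 0) - E hist j) 0)
    else
      PMF.pure fun j => max ((g j + if j ∈ S then (p : ℝ) / (S.card : ℝ) else 0) - E hist j) 0

/-- Main induction: there is a "good trajectory" along which a large set `T` of surviving
cups all gain the full harmonic sum, and whose probability is at least the product of the
inverse binomials. -/
lemma pkc_good_traj (n p : ℕ) (hp : 1 ≤ p) (E : List (Finset (Fin n)) → Fin n → ℝ)
    (hEp : ∀ hist, Set.ncard {j : Fin n | E hist j ≠ 0} ≤ p) :
    ∀ (m : ℕ) (S : Finset (Fin n)) (hist : List (Finset (Fin n))) (g : Fin n → ℝ),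
      p * m ≤ S.card → (∀ j ∈ S, 0 ≤ g j) →
      ∃ (T : Finset (Fin n)) (gf : Fin n → ℝ),
        T ⊆ S ∧ T.card = S.card - p * m ∧
        (∀ j ∈ T, g j + ∑ i ∈ Finset.range m, (p : ℝ) / ((S.card - p * i : ℕ) : ℝ) ≤ gf j) ∧
        (∏ i ∈ Finset.range m, ((Nat.choose (S.card - p * i) p : ℝ≥0∞))⁻¹)
          ≤ pkcGame n p E m S hist g gf := by
  intro m
  induction m with
  | zero =>
    intro S hist g _ hg
    refine ⟨S, g, subset_rfl, by simp, ?_, ?_⟩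
    · intro j hj; simp
    · simp [pkcGame, PMF.pure_apply]
  | succ m ih =>
    intro S hist g hcard hg
    have hpS : p ≤ S.card := le_trans (by nlinarith) hcard
    -- the set of cups the emptier touches
    set B : Finset (Fin n) := S.filter (fun j => E hist j ≠ 0) with hB
    have hBsub : (B : Set (Fin n)) ⊆ {j : Fin n | E hist j ≠ 0} := by
      intro j hj
      simp only [hB, Finset.coe_filter, Set.mem_setOf_eq] at hj ⊢
      exact hj.2
    have hBcard : B.card ≤ p := by
      calc B.card = (B : Set (Fin n)).ncard := (Set.ncard_coe_finset B).symm
        _ ≤ Set.ncard {j : Fin n | E hist j ≠ 0} :=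
            Set.ncard_le_ncard hBsub (Set.toFinite _)
        _ ≤ p := hEp hist
    obtain ⟨D, hBD, hDS, hDcard⟩ :=
      Finset.exists_subsuperset_card_eq (Finset.filter_subset _ S) hBcard hpS
    have hDmem : D ∈ Finset.powersetCard p S := by
      rw [Finset.mem_powersetCard]; exact ⟨hDS, hDcard⟩
    have hne : (Finset.powersetCard p S).Nonempty := ⟨D, hDmem⟩
    set g' : Fin n → ℝ := fun j =>
      max ((g j + if j ∈ S then (p : ℝ) / (S.card : ℝ) else 0) - E hist j) 0 with hg'
    have hSD : (S \ D).card = S.card - p := by rw [Finset.card_sdiff_of_subset hDS, hDcard]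
    have hmul : p * (m + 1) = p * m + p := by ring
    have hcard' : p * m ≤ (S \ D).card := by rw [hSD]; omega
    have hg'0 : ∀ j ∈ S \ D, 0 ≤ g' j := fun j _ => le_max_right _ _
    obtain ⟨T, gf, hTsub, hTcard, hTfill, hTprob⟩ :=
      ih (S \ D) (hist ++ [D]) g' hcard' hg'0
    have hEzero : ∀ j ∈ S \ D, E hist j = 0 := by
      intro j hj
      rw [Finset.mem_sdiff] at hj
      by_contra h
      exact hj.2 (hBD (by simp [hB, Finset.mem_filter, hj.1, h]))
    have hg'val : ∀ j ∈ S \ D, g' j = g j + (p : ℝ) / (S.card : ℝ) := by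
      intro j hj
      have hjS : j ∈ S := (Finset.mem_sdiff.mp hj).1
      have h0 : 0 ≤ g j + (p : ℝ) / (S.card : ℝ) := by
        have := hg j hjS
        positivity
      simp [hg', hjS, hEzero j hj, max_eq_left, h0]
    refine ⟨T, gf, hTsub.trans (Finset.sdiff_subset), ?_, ?_, ?_⟩
    · rw [hTcard, hSD]; omega
    · intro j hj
      have hjSD : j ∈ S \ D := hTsub hj
      have key := hTfill j hj
      rw [hg'val j hjSD] at key
      have hsum : ∑ i ∈ Finset.range (m + 1), (p : ℝ) / ((S.card - p * i : ℕ) : ℝ)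
          = (∑ i ∈ Finset.range m, (p : ℝ) / (((S \ D).card - p * i : ℕ) : ℝ))
            + (p : ℝ) / (S.card : ℝ) := by
        rw [Finset.sum_range_succ']
        congr 1
        apply Finset.sum_congr rfl
        intro i _
        have heq : S.card - p * (i + 1) = (S \ D).card - p * i := by
          rw [hSD]
          have : p * (i + 1) = p * i + p := by ring
          omega
        rw [heq]
      rw [hsum]; linarith
    · -- probability bound
      have hunfold : pkcGame n p E (m + 1) S hist g =
          (PMF.uniformOfFinset _ hne).bind fun D' =>
            pkcGame n p E m (S \ D') (hist ++ [D']) (fun j =>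
              max ((g j + if j ∈ S then (p : ℝ) / (S.card : ℝ) else 0) - E hist j) 0) := by
        rw [pkcGame]; rw [dif_pos hne]
      rw [hunfold, PMF.bind_apply]
      have hstep : ((Nat.choose S.card p : ℝ≥0∞))⁻¹
            * ∏ i ∈ Finset.range m, ((Nat.choose ((S \ D).card - p * i) p : ℝ≥0∞))⁻¹
          ≤ PMF.uniformOfFinset _ hne D *
            pkcGame n p E m (S \ D) (hist ++ [D]) g' gf := by
        apply mul_le_mul' _ hTprob
        rw [PMF.uniformOfFinset_apply, if_pos hDmem, Finset.card_powersetCard]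
      calc ∏ i ∈ Finset.range (m + 1), ((Nat.choose (S.card - p * i) p : ℝ≥0∞))⁻¹
          = ((Nat.choose S.card p : ℝ≥0∞))⁻¹
            * ∏ i ∈ Finset.range m, ((Nat.choose ((S \ D).card - p * i) p : ℝ≥0∞))⁻¹ := by
            rw [Finset.prod_range_succ']
            have h0 : S.card - p * 0 = S.card := by omega
            rw [h0, mul_comm]
            congr 1
            apply Finset.prod_congr rfl
            intro i _
            have heq : S.card - p * (i + 1) = (S \ D).card - p * i := by
              rw [hSD]
              have : p * (i + 1) = p * i + p := by ring
              omega
            rw [heq]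
        _ ≤ _ := hstep
        _ ≤ ∑' D', PMF.uniformOfFinset _ hne D' *
              pkcGame n p E m (S \ D') (hist ++ [D']) (fun j =>
                max ((g j + if j ∈ S then (p : ℝ) / (S.card : ℝ) else 0) - E hist j) 0) gf :=
            ENNReal.le_tsum D

set_option maxHeartbeats 1600000 in
/-- Against every adaptive deterministic emptier, the `(p,k,c)`-filling strategy makes at
least `k/(2e^c)` cups have fill at least `c/2` after its final step, with probability at
least `k^{-k}`. -/
theorem stmt_1 (n p k c : ℕ) (hp : 1 ≤ p) (hc : 2 ≤ c) (hpk : p ≤ k) (hkn : k ≤ n)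
    (hkpc : 2 ≤ (k : ℝ) / ((p : ℝ) * Real.exp c))
    (S₁ : Finset (Fin n)) (hS₁ : S₁.card = k)
    (E : List (Finset (Fin n)) → Fin n → ℝ)
    (hE0 : ∀ hist j, 0 ≤ E hist j) (hE1 : ∀ hist j, E hist j ≤ 1)
    (hEp : ∀ hist, Set.ncard {j : Fin n | E hist j ≠ 0} ≤ p) :
    ENNReal.ofReal (1 / (k : ℝ) ^ k) ≤
      (pkcGame n p E (⌊(k : ℝ) / (p : ℝ) * (1 - Real.exp (-(c : ℝ)))⌋₊ - 1) S₁ []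
          (fun _ => 0)).toOuterMeasure
        {g : Fin n → ℝ | (k : ℝ) / (2 * Real.exp c) ≤
          (Set.ncard {j : Fin n | (c : ℝ) / 2 ≤ g j} : ℝ)} := by
  classical
  set F : ℕ := ⌊(k : ℝ) / (p : ℝ) * (1 - Real.exp (-(c : ℝ)))⌋₊ with hF
  clear_value F
  set t : ℕ := F - 1 with ht
  clear_value t
  have hppos : (0 : ℝ) < p := by exact_mod_cast hp
  have hkpos : (0 : ℝ) < k := by have : 1 ≤ k := le_trans hp hpk; exact_mod_cast this
  have hecpos : (0 : ℝ) < Real.exp c := Real.exp_pos _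
  have hx : Real.exp (-(c : ℝ)) = (Real.exp c)⁻¹ := Real.exp_neg _
  have hxpos : (0 : ℝ) < Real.exp (-(c : ℝ)) := Real.exp_pos _
  have hxle : Real.exp (-(c : ℝ)) ≤ 1 := by
    rw [Real.exp_le_one_iff]
    exact neg_nonpos.mpr (by positivity)
  have hk2 : 2 * ((p : ℝ) * Real.exp c) ≤ k := by
    rw [le_div_iff₀ (by positivity)] at hkpc
    linarith
  have hpkx : (p : ℝ) ≤ k * Real.exp (-(c : ℝ)) / 2 := by
    rw [hx, le_div_iff₀ (by norm_num : (0:ℝ) < 2)]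
    have hke : (k : ℝ) * (Real.exp c)⁻¹ * Real.exp c = k := by field_simp
    nlinarith [hk2, hke, hecpos]
  -- exp c ≥ exp 2 > 7
  have hexp2 : (7 : ℝ) ≤ Real.exp c := by
    have h1 : (2 : ℝ) ≤ (c : ℝ) := by exact_mod_cast hc
    have h2 : Real.exp 2 ≤ Real.exp c := Real.exp_le_exp.mpr h1
    have h3 : Real.exp 2 = Real.exp 1 * Real.exp 1 := by
      rw [← Real.exp_add]; norm_num
    nlinarith [Real.exp_one_gt_d9]
  have hF1 : 1 ≤ F := by
    rw [hF]
    apply Nat.le_floor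
    have h1 : 2 * Real.exp (c : ℝ) ≤ (k : ℝ) / p := by
      rw [le_div_iff₀ hppos]; linarith
    have h2 : Real.exp (c : ℝ) * Real.exp (-(c : ℝ)) = 1 := by
      rw [← Real.exp_add]; simp
    have h4 : (2 : ℝ) * Real.exp c * (1 - Real.exp (-(c:ℝ))) ≤
        (k : ℝ) / p * (1 - Real.exp (-(c : ℝ)))  := by
      apply mul_le_mul_of_nonneg_right h1 (by linarith)
    have h5 : (2 : ℝ) * Real.exp c * (1 - Real.exp (-(c:ℝ)))
        = 2 * Real.exp c - 2 := by
      linear_combination (-2 : ℝ) * h2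
    push_cast
    linarith [hexp2]
  have htF : (t : ℝ) = (F : ℝ) - 1 := by
    rw [ht]; push_cast [hF1]; ring
  have hFle : (F : ℝ) ≤ (k : ℝ) / p * (1 - Real.exp (-(c : ℝ))) := by
    rw [hF]
    apply Nat.floor_le
    exact mul_nonneg (by positivity) (by linarith)
  have hFgt : (k : ℝ) / p * (1 - Real.exp (-(c : ℝ))) < (F : ℝ) + 1 := by
    rw [hF]; exact Nat.lt_floor_add_one _
  have hdivmul : (k : ℝ) / p * (1 - Real.exp (-(c : ℝ))) * p
      = k * (1 - Real.exp (-(c : ℝ))) := by field_simp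
  have hptle : (p : ℝ) * t ≤ (k : ℝ) * (1 - Real.exp (-(c : ℝ))) - p := by
    rw [htF]
    have h' := mul_le_mul_of_nonneg_right hFle hppos.le
    rw [hdivmul] at h'
    nlinarith [h']
  have hptgt : (k : ℝ) * (1 - Real.exp (-(c : ℝ))) - 2 * p < (p : ℝ) * t := by
    rw [htF]
    have h' := mul_lt_mul_of_pos_right hFgt hppos
    rw [hdivmul] at h'
    nlinarith [h']
  -- p * t ≤ k in ℕ
  have hptk : p * t ≤ k := by
    have h1 : (p : ℝ) * t ≤ k := by linarith [hptle, mul_pos hkpos hxpos]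
    exact_mod_cast (by push_cast; exact h1 : ((p * t : ℕ) : ℝ) ≤ (k : ℕ))
  have hcastkt : ((k - p * t : ℕ) : ℝ) = (k : ℝ) - p * t := by
    push_cast [Nat.cast_sub hptk]; ring
  -- survivors count
  have hsurv : (k : ℝ) / (2 * Real.exp c) ≤ ((k - p * t : ℕ) : ℝ) := by
    rw [hcastkt]
    have h1 : (k : ℝ) - p * t ≥ k * Real.exp (-(c:ℝ)) + p := by linarith [hptle]
    have h2 : (k : ℝ) * Real.exp (-(c:ℝ)) = k / Real.exp c := by
      rw [hx]; ring
    have h3 : (k : ℝ) / (2 * Real.exp c) ≤ k / Real.exp c := by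
      apply div_le_div_of_nonneg_left hkpos.le hecpos; linarith
    linarith
  -- the harmonic sum is at least c/2
  have hkppt : (0:ℝ) < (k : ℝ) + p - p * t := by
    linarith [hptle, mul_pos hkpos hxpos, hppos]
  have hkppt2 : (k : ℝ) + p - p * t ≤ 5/2 * (k * Real.exp (-(c:ℝ))) := by
    linarith [hptgt, hpkx]
  have hsum : (c : ℝ) / 2 ≤ ∑ i ∈ Finset.range t, (p : ℝ) / ((k - p * i : ℕ) : ℝ) := by
    set f : ℕ → ℝ := fun i => Real.log ((k : ℝ) + p - p * i) with hf
    have hstep : ∀ i ∈ Finset.range t, f i - f (i + 1) ≤ (p : ℝ) / ((k - p * i : ℕ) : ℝ) := by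
      intro i hi
      rw [Finset.mem_range] at hi
      have hle : p * (i + 1) ≤ p * t := Nat.mul_le_mul_left p hi
      have hle' : ((p : ℝ)) * i + p ≤ (p:ℝ) * t := by
        have : ((p * (i+1) : ℕ) : ℝ) ≤ ((p * t : ℕ) : ℝ) := by exact_mod_cast hle
        push_cast at this; linarith
      have hpi : p * i ≤ k := by
        calc p * i ≤ p * t := Nat.mul_le_mul_left p hi.le
          _ ≤ k := hptk
      have hcast : ((k - p * i : ℕ) : ℝ) = (k : ℝ) - p * i := by
        push_cast [Nat.cast_sub hpi]; ring
      have ha : (0 : ℝ) < (k : ℝ) - p * i := by linarith [hle', hptle, mul_pos hkpos hxpos]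
      rw [hcast]
      have hfi : f i = Real.log (((k : ℝ) - p * i) + p) := by
        rw [hf]; congr 1; push_cast; ring
      have hfi1 : f (i + 1) = Real.log ((k : ℝ) - p * i) := by
        rw [hf]; congr 1; push_cast; ring
      rw [hfi, hfi1, ← Real.log_div (by linarith) (ne_of_gt ha)]
      have := Real.log_le_sub_one_of_pos (x := (((k : ℝ) - p * i) + p) / ((k : ℝ) - p * i))
        (by positivity)
      have heq : (((k : ℝ) - p * i) + p) / ((k : ℝ) - p * i) - 1 = (p : ℝ) / ((k:ℝ) - p * i) := by
        field_simp; ring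
      linarith [this, heq ▸ this]
    have htel : ∑ i ∈ Finset.range t, (f i - f (i + 1)) = f 0 - f t :=
      Finset.sum_range_sub' f t
    have hsum1 : f 0 - f t ≤ ∑ i ∈ Finset.range t, (p : ℝ) / ((k - p * i : ℕ) : ℝ) := by
      rw [← htel]
      exact Finset.sum_le_sum hstep
    have hf0 : Real.log (k : ℝ) ≤ f 0 := by
      rw [hf]
      simp only [Nat.cast_zero, mul_zero, sub_zero]
      apply Real.log_le_log hkpos
      linarith
    have hft : f t ≤ Real.log (5/2) + Real.log (k : ℝ) + (- c) := by
      rw [hf]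
      have h1 : Real.log ((k : ℝ) + p - p * t) ≤ Real.log (5/2 * (k * Real.exp (-(c:ℝ)))) :=
        Real.log_le_log hkppt hkppt2
      have h2 : Real.log (5/2 * ((k:ℝ) * Real.exp (-(c:ℝ))))
          = Real.log (5/2) + Real.log (k : ℝ) + (-(c:ℝ)) := by
        rw [Real.log_mul (by norm_num) (by positivity), Real.log_mul (ne_of_gt hkpos)
          (ne_of_gt hxpos), Real.log_exp]
        ring
      linarith
    have hlog52 : Real.log (5/2 : ℝ) ≤ 1 := by
      rw [Real.log_le_iff_le_exp (by norm_num)]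
      nlinarith [Real.exp_one_gt_d9]
    have hc2 : (2 : ℝ) ≤ c := by exact_mod_cast hc
    linarith
  -- apply the good-trajectory lemma
  obtain ⟨T, gf, hTsub, hTcard, hTfill, hTprob⟩ :=
    pkc_good_traj n p hp E hEp t S₁ [] (fun _ => 0) (by rw [hS₁]; exact hptk) (fun _ _ => le_rfl)
  rw [hS₁] at hTcard hTfill hTprob
  -- gf lies in the event
  have hmem : gf ∈ {g : Fin n → ℝ | (k : ℝ) / (2 * Real.exp c) ≤
      (Set.ncard {j : Fin n | (c : ℝ) / 2 ≤ g j} : ℝ)} := by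
    have hTin : (T : Set (Fin n)) ⊆ {j : Fin n | (c : ℝ) / 2 ≤ gf j} := by
      intro j hj
      have := hTfill j hj
      simp only [Set.mem_setOf_eq]
      simp only [zero_add] at this
      linarith
    have h1 : T.card ≤ Set.ncard {j : Fin n | (c : ℝ) / 2 ≤ gf j} := by
      rw [← Set.ncard_coe_finset]
      exact Set.ncard_le_ncard hTin (Set.toFinite _)
    have h2 : ((k - p * t : ℕ) : ℝ) ≤ (Set.ncard {j : Fin n | (c : ℝ) / 2 ≤ gf j} : ℝ) := by
      rw [← hTcard]; exact_mod_cast h1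
    exact le_trans hsurv h2
  -- probability bound
  have hchoose : ∏ i ∈ Finset.range t, Nat.choose (k - p * i) p ≤ k ^ k := by
    calc ∏ i ∈ Finset.range t, Nat.choose (k - p * i) p
        ≤ ∏ i ∈ Finset.range t, k ^ p := by
          apply Finset.prod_le_prod' 
          intro i _
          calc Nat.choose (k - p * i) p ≤ (k - p * i) ^ p := Nat.choose_le_pow _ _
            _ ≤ k ^ p := Nat.pow_le_pow_left (Nat.sub_le _ _) _
      _ = k ^ (p * t) := by
          rw [Finset.prod_const, Finset.card_range, ← pow_mul]
      _ ≤ k ^ k := Nat.pow_le_pow_right (le_trans hp hpk) hptk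
  have hprodLB : ENNReal.ofReal (1 / (k : ℝ) ^ k)
      ≤ ∏ i ∈ Finset.range t, ((Nat.choose (k - p * i) p : ℝ≥0∞))⁻¹ := by
    have hkk : (0:ℝ) < ((k ^ k : ℕ) : ℝ) := by
      have : 0 < k ^ k := pow_pos (by omega) k
      exact_mod_cast this
    have h1 : ENNReal.ofReal (1 / (k : ℝ) ^ k) = ((k ^ k : ℕ) : ℝ≥0∞)⁻¹ := by
      rw [one_div, show ((k : ℝ) ^ k) = ((k ^ k : ℕ) : ℝ) from by push_cast; ring,
        ENNReal.ofReal_inv_of_pos hkk, ENNReal.ofReal_natCast]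
    rw [h1, ← ENNReal.prod_inv_distrib]
    · apply ENNReal.inv_le_inv.mpr
      calc ∏ i ∈ Finset.range t, ((Nat.choose (k - p * i) p : ℝ≥0∞))
          = ((∏ i ∈ Finset.range t, Nat.choose (k - p * i) p : ℕ) : ℝ≥0∞) := by
            push_cast; rfl
        _ ≤ ((k ^ k : ℕ) : ℝ≥0∞) := by exact_mod_cast hchoose
    · intro i hi j _ _
      left
      simp only [ne_eq, Nat.cast_eq_zero]
      rw [Finset.mem_coe, Finset.mem_range] at hi
      intro hcontra
      rw [Nat.choose_eq_zero_iff] at hcontra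
      have h1 : p * (i + 1) ≤ p * t := Nat.mul_le_mul_left p hi
      have h2 : p * (i + 1) = p * i + p := by ring
      omega
  -- assemble
  calc ENNReal.ofReal (1 / (k : ℝ) ^ k)
      ≤ ∏ i ∈ Finset.range t, ((Nat.choose (k - p * i) p : ℝ≥0∞))⁻¹ := hprodLB
    _ ≤ pkcGame n p E t S₁ [] (fun _ => 0) gf := hTprob
    _ = (pkcGame n p E t S₁ [] (fun _ => 0)).toOuterMeasure {gf} :=
        (PMF.toOuterMeasure_apply_singleton _ gf).symm
    _ ≤ _ := by
        apply (pkcGame n p E t S₁ [] (fun _ => 0)).toOuterMeasure.mono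
        intro x hx
        rw [Set.mem_singleton_iff] at hx
        subst hx
        exact hmem
end

section
/- Let c be a monotone stateless emptier on n cups that, in every state having at least one cup with positive fill, selects a cup with positive fill. Then there exist functions σ_1,…,σ_n from the nonnegative integer multiples of 1/2 to ℝ, each strictly increasing and with all values σ_j(v) pairwise distinct over pairs (j,v), such that for every state S having at least one cup with positive fill, c(S) is the unique cup j maximizing σ_j(S(j)). -/
/-- A state of `n` cups: each fill is a nonnegative integer multiple of `1/2`. -/
def HalfState (n : ℕ) (S : Fin n → ℝ) : Prop := ∀ i, ∃ k : ℕ, S i = (k : ℝ) / 2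

/-- A stateless emptier `c` is monotone if whenever `c S = j` and `S'` agrees with `S`
except that the fill of a single cup `i ≠ j` has been reduced, then `c S' = j`. -/
def MonotoneEmptier (n : ℕ) (c : (Fin n → ℝ) → Fin n) : Prop :=
  ∀ S S' : Fin n → ℝ, HalfState n S → HalfState n S' →
    ∀ i : Fin n, i ≠ c S → S' i ≤ S i → (∀ j, j ≠ i → S' j = S j) → c S' = c S

namespace Stmt4Aux

/-- The fill level `(k+1)/2`. -/
noncomputable def fill (k : ℕ) : ℝ := ((k : ℝ) + 1) / 2

lemma fill_pos (k : ℕ) : 0 < fill k := by unfold fill; positivity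

lemma fill_half (k : ℕ) : ∃ m : ℕ, fill k = (m : ℝ) / 2 :=
  ⟨k + 1, by unfold fill; push_cast; ring⟩

lemma fill_le_fill {a b : ℕ} (h : a ≤ b) : fill a ≤ fill b := by
  unfold fill
  have : (a : ℝ) ≤ b := by exact_mod_cast h
  linarith

lemma half_nonneg {n : ℕ} {S : Fin n → ℝ} (hS : HalfState n S) (i : Fin n) : 0 ≤ S i := by
  obtain ⟨k, hk⟩ := hS i; rw [hk]; positivity

/-- A two-cup state. -/
noncomputable def pst {n : ℕ} (j i : Fin n) (v u : ℝ) : Fin n → ℝ :=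
  fun m => if m = j then v else if m = i then u else 0

lemma pst_half {n : ℕ} (j i : Fin n) {v u : ℝ}
    (hv : ∃ k : ℕ, v = (k : ℝ) / 2) (hu : ∃ k : ℕ, u = (k : ℝ) / 2) :
    HalfState n (pst j i v u) := by
  intro m
  unfold pst
  split_ifs
  · exact hv
  · exact hu
  · exact ⟨0, by simp⟩

lemma pst_symm {n : ℕ} {j i : Fin n} (hij : j ≠ i) (v u : ℝ) :
    pst j i v u = pst i j u v := by
  funext m
  unfold pst
  by_cases h1 : m = j
  · simp [h1, hij]
  · by_cases h2 : m = i <;> simp [h1, h2, hij.symm]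

/-- Zeroing out a set of non-selected cups does not change the selection. -/
lemma zeroOut {n : ℕ} (c : (Fin n → ℝ) → Fin n) (hmono : MonotoneEmptier n c)
    (S : Fin n → ℝ) (hS : HalfState n S) (B : Finset (Fin n)) (hB : c S ∉ B) :
    c (fun m => if m ∈ B then 0 else S m) = c S := by
  classical
  induction B using Finset.induction_on with
  | empty =>
    have h : (fun m => if m ∈ (∅ : Finset (Fin n)) then 0 else S m) = S := by
      funext m; simp
    rw [h]
  | @insert a B ha ih =>
    have hB' : c S ∉ B := fun h => hB (Finset.mem_insert_of_mem h)
    have haS : a ≠ c S := fun h => hB (h ▸ Finset.mem_insert_self a B)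
    have h1 : c (fun m => if m ∈ B then 0 else S m) = c S := ih hB'
    have hhalf1 : HalfState n (fun m => if m ∈ B then 0 else S m) := by
      intro m; by_cases h : m ∈ B <;> simp [h]
      · exact ⟨0, by simp⟩
      · exact hS m
    have hhalf2 : HalfState n (fun m => if m ∈ insert a B then 0 else S m) := by
      intro m; by_cases h : m ∈ insert a B <;> simp [h]
      · exact ⟨0, by simp⟩
      · exact hS m
    have key := hmono (fun m => if m ∈ B then 0 else S m)
      (fun m => if m ∈ insert a B then 0 else S m) hhalf1 hhalf2 a
      (by rw [h1]; exact haS)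
      (by
        simp only [Finset.mem_insert_self, if_pos]
        by_cases h : a ∈ B <;> simp [h]
        exact half_nonneg hS a)
      (by
        intro m hm
        have : (m ∈ insert a B) ↔ (m ∈ B) := by
          simp [Finset.mem_insert, hm]
        simp only [this])
    rw [key, h1]

/-- Any strict total order on a countable type embeds into `ℚ`. -/
lemma exists_ratEmbedding {α : Type*} [Countable α] (r : α → α → Prop)
    (hSTO : IsStrictTotalOrder α r) : ∃ f : α → ℚ, ∀ p q, r p q → f p < f q := by
  classical
  letI : DecidableRel r := fun _ _ => Classical.dec _
  letI : LinearOrder α := linearOrderOfSTO r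
  obtain ⟨e⟩ := Order.embedding_from_countable_to_dense α ℚ
  exact ⟨e, fun p q h => e.lt_iff_lt.2 h⟩

end Stmt4Aux

open Stmt4Aux in
/-- Every monotone stateless emptier (that selects a positive-fill cup whenever one
exists) is a score-based emptier: there are strictly increasing score functions
`σ j` on the nonnegative half-integer fills, with pairwise distinct values over pairs
`(j, v)`, such that in every state with a positively filled cup the selected cup is the
unique cup maximizing `σ j (S j)`. -/
theorem stmt_4 (n : ℕ) (c : (Fin n → ℝ) → Fin n) (hmono : MonotoneEmptier n c)
    (hpos : ∀ S : Fin n → ℝ, HalfState n S → (∃ i, 0 < S i) → 0 < S (c S)) :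
    ∃ σ : Fin n → ℝ → ℝ,
      (∀ j, StrictMonoOn (σ j) {x : ℝ | ∃ k : ℕ, x = (k : ℝ) / 2}) ∧
      (∀ j v j' v', (∃ k : ℕ, v = (k : ℝ) / 2) → (∃ k : ℕ, v' = (k : ℝ) / 2) →
        σ j v = σ j' v' → j = j' ∧ v = v') ∧
      (∀ S : Fin n → ℝ, HalfState n S → (∃ i, 0 < S i) →
        ∀ j, j ≠ c S → σ j (S j) < σ (c S) (S (c S))) := by
  classical
  -- `r` : the comparison relation on (cup, fill index) pairs, fill index k means fill (k+1)/2
  set r : (Fin n × ℕ) → (Fin n × ℕ) → Prop := fun p q =>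
    if p.1 = q.1 then p.2 < q.2
    else c (pst p.1 q.1 (fill p.2) (fill q.2)) = q.1 with hrdef
  -- basic pair facts
  have pairResolve : ∀ (j i : Fin n) (a b : ℕ), j ≠ i →
      c (pst j i (fill a) (fill b)) = j ∨ c (pst j i (fill a) (fill b)) = i := by
    intro j i a b hij
    by_contra h
    push_neg at h
    have hp := hpos (pst j i (fill a) (fill b))
      (pst_half j i (fill_half a) (fill_half b))
      ⟨j, by simp [pst, fill_pos]⟩
    have : pst j i (fill a) (fill b) (c (pst j i (fill a) (fill b))) = 0 := by
      simp [pst, h.1, h.2]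
    rw [this] at hp
    exact lt_irrefl 0 hp
  -- monotone reduction of first cup
  have redFst : ∀ (j i : Fin n) (v v' u : ℝ), j ≠ i →
      (∃ k : ℕ, v = (k : ℝ) / 2) → (∃ k : ℕ, v' = (k : ℝ) / 2) → (∃ k : ℕ, u = (k : ℝ) / 2) →
      v' ≤ v → c (pst j i v u) = i → c (pst j i v' u) = i := by
    intro j i v v' u hij hv hv' hu hle hc
    have key := hmono (pst j i v u) (pst j i v' u)
      (pst_half j i hv hu) (pst_half j i hv' hu) j
      (by rw [hc]; exact hij)
      (by simp [pst, hle])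
      (by intro m hm; simp [pst, hm])
    rw [key, hc]
  have redSnd : ∀ (j i : Fin n) (v u u' : ℝ), j ≠ i →
      (∃ k : ℕ, v = (k : ℝ) / 2) → (∃ k : ℕ, u = (k : ℝ) / 2) → (∃ k : ℕ, u' = (k : ℝ) / 2) →
      u' ≤ u → c (pst j i v u) = j → c (pst j i v u') = j := by
    intro j i v u u' hij hv hu hu' hle hc
    rw [pst_symm hij] at hc ⊢
    exact redFst i j u u' v hij.symm hu hu' hv hle hc
  -- r is a strict total order
  have rtri : ∀ p q : Fin n × ℕ, r p q ∨ p = q ∨ r q p := by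
    intro p q
    by_cases h : p.1 = q.1
    · rcases lt_trichotomy p.2 q.2 with h2 | h2 | h2
      · exact Or.inl (by simp [hrdef, h, h2])
      · exact Or.inr (Or.inl (Prod.ext h h2))
      · exact Or.inr (Or.inr (by simp [hrdef, h.symm, h2]))
    · rcases pairResolve p.1 q.1 p.2 q.2 h with hc | hc
      · refine Or.inr (Or.inr ?_)
        have : pst q.1 p.1 (fill q.2) (fill p.2) = pst p.1 q.1 (fill p.2) (fill q.2) :=
          (pst_symm h _ _).symm
        simp [hrdef, Ne.symm h, this, hc]
      · exact Or.inl (by simp [hrdef, h, hc])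
  have rirr : ∀ p : Fin n × ℕ, ¬ r p p := by
    intro p; simp [hrdef]
  have rtrans : ∀ p q s : Fin n × ℕ, r p q → r q s → r p s := by
    intro p q s hpq hqs
    by_cases h1 : p.1 = q.1 <;> by_cases h2 : q.1 = s.1
    · -- same cup throughout
      have h3 : p.1 = s.1 := h1.trans h2
      simp only [hrdef, if_pos h1] at hpq
      simp only [hrdef, if_pos h2] at hqs
      simp only [hrdef, if_pos h3]
      omega
    · -- p.1 = q.1 ≠ s.1
      have h3 : p.1 ≠ s.1 := h1 ▸ h2
      simp only [hrdef, if_pos h1] at hpq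
      simp only [hrdef, if_neg h2] at hqs
      simp only [hrdef, if_neg h3]
      have := redFst q.1 s.1 (fill q.2) (fill p.2) (fill s.2) h2
        (fill_half _) (fill_half _) (fill_half _) (fill_le_fill (le_of_lt hpq)) hqs
      rw [h1]
      exact this
    · -- p.1 ≠ q.1 = s.1
      have h3 : p.1 ≠ s.1 := h2 ▸ h1
      simp only [hrdef, if_neg h1] at hpq
      simp only [hrdef, if_pos h2] at hqs
      simp only [hrdef, if_neg h3]
      rcases pairResolve p.1 s.1 p.2 s.2 h3 with hc | hc
      · exfalso
        have := redSnd p.1 s.1 (fill p.2) (fill s.2) (fill q.2) h3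
          (fill_half _) (fill_half _) (fill_half _) (fill_le_fill (le_of_lt hqs)) hc
        rw [← h2] at this
        exact h1 (this ▸ hpq)
      · exact hc
    · by_cases h3 : p.1 = s.1
      · -- p and s are the same cup, q different
        simp only [hrdef, if_neg h1] at hpq
        simp only [hrdef, if_neg h2] at hqs
        simp only [hrdef, if_pos h3]
        by_contra hcon
        push_neg at hcon
        have hle : fill s.2 ≤ fill p.2 := fill_le_fill (by omega)
        have := redFst p.1 q.1 (fill p.2) (fill s.2) (fill q.2) h1
          (fill_half _) (fill_half _) (fill_half _) hle hpq
        -- this : c (pst p.1 q.1 (fill s.2) (fill q.2)) = q.1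
        have heq : pst q.1 s.1 (fill q.2) (fill s.2) = pst p.1 q.1 (fill s.2) (fill q.2) := by
          rw [pst_symm h2, h3]
        rw [heq, this] at hqs
        exact h2 hqs
      · -- all three cups distinct: use a 3-cup state
        simp only [hrdef, if_neg h1] at hpq
        simp only [hrdef, if_neg h2] at hqs
        simp only [hrdef, if_neg h3]
        set T : Fin n → ℝ := fun m =>
          if m = p.1 then fill p.2 else if m = q.1 then fill q.2
          else if m = s.1 then fill s.2 else 0 with hT
        have hThalf : HalfState n T := by
          intro m
          simp only [hT]
          split_ifs
          · exact fill_half _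
          · exact fill_half _
          · exact fill_half _
          · exact ⟨0, by simp⟩
        have hTpos : ∃ i, 0 < T i := ⟨p.1, by simp [hT, fill_pos]⟩
        have hTc : c T = p.1 ∨ c T = q.1 ∨ c T = s.1 := by
          by_contra h
          push_neg at h
          have hp := hpos T hThalf hTpos
          have : T (c T) = 0 := by
            have e : ∀ m, m ≠ p.1 → m ≠ q.1 → m ≠ s.1 → T m = 0 := by
              intro m a b d; simp [hT, a, b, d]
            exact e _ h.1 h.2.1 h.2.2
          rw [this] at hp
          exact lt_irrefl 0 hp
        rcases hTc with hc | hc | hc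
        · exfalso
          have hnot : c T ∉ ({s.1} : Finset (Fin n)) := by
            simp [hc]; exact h3
          have hz := zeroOut c hmono T hThalf {s.1} hnot
          have heq : (fun m => if m ∈ ({s.1} : Finset (Fin n)) then 0 else T m)
              = pst p.1 q.1 (fill p.2) (fill q.2) := by
            funext x
            by_cases hx3 : x = s.1
            · rw [hx3]
              simp [pst, Ne.symm h3, Ne.symm h2]
            · rw [if_neg (show x ∉ ({s.1} : Finset (Fin n)) by simpa using hx3), hT]
              simp only [pst]
              by_cases hx1 : x = p.1
              · simp [hx1, h1, h2, h3, Ne.symm h1, Ne.symm h2, Ne.symm h3]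
              · by_cases hx2 : x = q.1 <;> simp [hx1, hx2, hx3, h1, h2, h3, Ne.symm h1, Ne.symm h2, Ne.symm h3]
          rw [heq, hpq] at hz
          exact h1 ((hz.trans hc).symm)
        · exfalso
          have hnot : c T ∉ ({p.1} : Finset (Fin n)) := by
            simp [hc]; exact fun e => h1 e.symm
          have hz := zeroOut c hmono T hThalf {p.1} hnot
          have heq : (fun m => if m ∈ ({p.1} : Finset (Fin n)) then 0 else T m)
              = pst q.1 s.1 (fill q.2) (fill s.2) := by
            funext x
            by_cases hx1 : x = p.1
            · rw [hx1]
              simp [pst, h1, h3]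
            · rw [if_neg (show x ∉ ({p.1} : Finset (Fin n)) by simpa using hx1), hT]
              simp only [pst]
              by_cases hx2 : x = q.1
              · simp [hx2, hx1, h1, h2, h3, Ne.symm h1, Ne.symm h2, Ne.symm h3]
              · by_cases hx3 : x = s.1 <;> simp [hx1, hx2, hx3, h1, h2, h3, Ne.symm h1, Ne.symm h2, Ne.symm h3]
          rw [heq, hqs] at hz
          exact h2 ((hz.trans hc).symm)
        · have hnot : c T ∉ ({q.1} : Finset (Fin n)) := by
            simp [hc]; exact fun e => h2 e.symm
          have hz := zeroOut c hmono T hThalf {q.1} hnot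
          have heq : (fun m => if m ∈ ({q.1} : Finset (Fin n)) then 0 else T m)
              = pst p.1 s.1 (fill p.2) (fill s.2) := by
            funext x
            by_cases hx2 : x = q.1
            · rw [hx2]
              simp [pst, Ne.symm h1, h2]
            · rw [if_neg (show x ∉ ({q.1} : Finset (Fin n)) by simpa using hx2), hT]
              simp only [pst]
              by_cases hx1 : x = p.1
              · simp [hx1, h1, h2, h3, Ne.symm h1, Ne.symm h2, Ne.symm h3]
              · by_cases hx3 : x = s.1 <;> simp [hx1, hx2, hx3, h1, h2, h3, Ne.symm h1, Ne.symm h2, Ne.symm h3]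
          rw [heq] at hz
          rw [hz, hc]
  have hSTO : IsStrictTotalOrder (Fin n × ℕ) r :=
    { trichotomous := fun a b hab hba => ((rtri a b).resolve_left hab).resolve_right hba
      irrefl := rirr
      trans := rtrans }
  obtain ⟨f, hf⟩ := exists_ratEmbedding r hSTO
  set E : (Fin n × ℕ) → ℝ := fun p => Real.arctan (f p) with hE
  have Emono : ∀ p q, r p q → E p < E q := by
    intro p q h
    exact Real.arctan_strictMono (by exact_mod_cast hf p q h)
  have Einj : ∀ p q, E p = E q → p = q := by
    intro p q h
    rcases rtri p q with hr | hr | hr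
    · exact absurd h (ne_of_lt (Emono _ _ hr))
    · exact hr
    · exact absurd h.symm (ne_of_lt (Emono _ _ hr))
  have Ebound : ∀ p, -(Real.pi / 2) < E p := fun p => Real.neg_pi_div_two_lt_arctan _
  -- the score functions
  set σ : Fin n → ℝ → ℝ := fun j x =>
    if x = 0 then -Real.pi - 1 - (j : ℕ) else E (j, ⌊2 * x⌋₊ - 1) with hσ
  have low : ∀ (j : Fin n) (p : Fin n × ℕ), -Real.pi - 1 - (j : ℕ) < E p := by
    intro j p
    have h1 := Ebound p
    have h2 := Real.pi_pos
    have h3 : (0:ℝ) ≤ (j : ℕ) := Nat.cast_nonneg _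
    linarith
  -- floor computation
  have hfloor : ∀ k : ℕ, ⌊(2:ℝ) * ((k : ℝ) / 2)⌋₊ = k := by
    intro k
    have : (2:ℝ) * ((k : ℝ) / 2) = (k : ℝ) := by ring
    rw [this, Nat.floor_natCast]
  have hfill : ∀ k : ℕ, 1 ≤ k → fill (k - 1) = (k : ℝ) / 2 := by
    intro k hk
    unfold fill
    have : ((k - 1 : ℕ) : ℝ) = (k : ℝ) - 1 := by
      push_cast [Nat.cast_sub hk]; ring
    rw [this]; ring
  -- value of σ at a positive half-integer
  have hhalfpos : ∀ k : ℕ, 1 ≤ k → (0:ℝ) < (k : ℝ) / 2 := by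
    intro k hk
    have : (1:ℝ) ≤ (k : ℝ) := by exact_mod_cast hk
    linarith
  have hσval : ∀ (j : Fin n) (k : ℕ), 1 ≤ k → σ j ((k : ℝ) / 2) = E (j, k - 1) := by
    intro j k hk
    have hne : ((k : ℝ) / 2) ≠ 0 := ne_of_gt (hhalfpos k hk)
    simp only [hσ, if_neg hne, hfloor k]
  have hσ0 : ∀ j : Fin n, σ j 0 = -Real.pi - 1 - (j : ℕ) := by
    intro j; simp [hσ]
  have hkpos : ∀ k : ℕ, ((k : ℝ) / 2 ≠ 0) → 1 ≤ k := by
    intro k hk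
    rcases Nat.eq_zero_or_pos k with h | h
    · exfalso; apply hk; simp [h]
    · exact h
  refine ⟨σ, ?_, ?_, ?_⟩
  · -- strict monotonicity
    intro j x hx y hy hxy
    obtain ⟨a, rfl⟩ := hx
    obtain ⟨b, rfl⟩ := hy
    have hab : a < b := by
      by_contra h
      push_neg at h
      have : (b : ℝ) ≤ (a : ℝ) := by exact_mod_cast h
      linarith
    have hb1 : 1 ≤ b := by omega
    rcases Nat.eq_zero_or_pos a with ha0 | ha1
    · subst ha0
      rw [show ((0:ℕ):ℝ)/2 = (0:ℝ) by simp, hσ0, hσval j b hb1]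
      exact low j _
    · rw [hσval j a ha1, hσval j b hb1]
      apply Emono
      simp only [hrdef, if_pos rfl]
      omega
  · -- distinctness
    intro j v j' v' hv hv' heq
    obtain ⟨a, rfl⟩ := hv
    obtain ⟨b, rfl⟩ := hv'
    rcases Nat.eq_zero_or_pos a with ha0 | ha1 <;> rcases Nat.eq_zero_or_pos b with hb0 | hb1
    · subst ha0; subst hb0
      simp only [show ((0:ℕ):ℝ)/2 = (0:ℝ) by simp, hσ0] at heq ⊢
      have : ((j : ℕ) : ℝ) = ((j' : ℕ) : ℝ) := by linarith
      have : (j : ℕ) = (j' : ℕ) := by exact_mod_cast this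
      exact ⟨Fin.ext this, trivial⟩
    · exfalso
      subst ha0
      rw [show ((0:ℕ):ℝ)/2 = (0:ℝ) by simp, hσ0, hσval j' b hb1] at heq
      exact absurd heq (ne_of_lt (low j _))
    · exfalso
      subst hb0
      rw [show ((0:ℕ):ℝ)/2 = (0:ℝ) by simp, hσ0, hσval j a ha1] at heq
      exact absurd heq.symm (ne_of_lt (low j' _))
    · rw [hσval j a ha1, hσval j' b hb1] at heq
      have := Einj _ _ heq
      have h1 : j = j' := congrArg Prod.fst this
      have h2 : a - 1 = b - 1 := congrArg Prod.snd this
      have h3 : a = b := by omega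
      exact ⟨h1, by rw [h3]⟩
  · -- the selected cup is the unique maximizer
    intro S hS hSpos j hj
    set m := c S with hm
    have hmpos : 0 < S m := hpos S hS hSpos
    obtain ⟨km, hkm⟩ := hS m
    have hkm1 : 1 ≤ km := hkpos km (by rw [← hkm]; exact ne_of_gt hmpos)
    obtain ⟨kj, hkj⟩ := hS j
    rcases Nat.eq_zero_or_pos kj with hkj0 | hkj1
    · subst hkj0
      rw [hkj, show ((0:ℕ):ℝ)/2 = (0:ℝ) by simp, hσ0, hkm, hσval m km hkm1]
      exact low j _
    · rw [hkj, hkm, hσval j kj hkj1, hσval m km hkm1]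
      apply Emono
      simp only [hrdef, if_neg hj]
      -- need : c (pst j m (fill (kj-1)) (fill (km-1))) = m
      have hB : m ∉ (Finset.univ.filter (fun x => x ≠ j ∧ x ≠ m) : Finset (Fin n)) := by
        simp
      have hz := zeroOut c hmono S hS _ hB
      have heq : (fun x => if x ∈ (Finset.univ.filter (fun x => x ≠ j ∧ x ≠ m) :
          Finset (Fin n)) then 0 else S x) = pst j m (fill (kj - 1)) (fill (km - 1)) := by
        funext x
        simp only [Finset.mem_filter, Finset.mem_univ, true_and, pst]
        by_cases hx1 : x = j
        · simp [hx1, hfill kj hkj1, hkj]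
        · by_cases hx2 : x = m
          · simp [hx1, hx2, hfill km hkm1, hkm, Ne.symm hj]
          · simp [hx1, hx2]
      rw [heq] at hz
      exact hz
end

section
/- Let c be a monotone stateless emptier on n cups. For every state S and every cup j' ≠ c(S), the pair (c(S), S(c(S))) dominates (j', S(j')). -/
/-- The state in which cup `j₁` has fill `r₁`, cup `j₂` has fill `r₂`, and all other
cups are empty. -/
def twoCup (n : ℕ) (j₁ j₂ : Fin n) (r₁ r₂ : ℝ) : Fin n → ℝ :=
  fun k => if k = j₁ then r₁ else if k = j₂ then r₂ else 0

/-- `(j₁, r₁)` dominates `(j₂, r₂)`: for `j₁ ≠ j₂`, the emptier selects `j₁` in the state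
where only `j₁` and `j₂` are nonempty with fills `r₁`, `r₂`; for `j₁ = j₂`, `r₁ > r₂`. -/
def Dominates (n : ℕ) (c : (Fin n → ℝ) → Fin n)
    (j₁ : Fin n) (r₁ : ℝ) (j₂ : Fin n) (r₂ : ℝ) : Prop :=
  if j₁ = j₂ then r₂ < r₁ else c (twoCup n j₁ j₂ r₁ r₂) = j₁

lemma halfstate_nonneg {n : ℕ} {S : Fin n → ℝ} (h : HalfState n S) (i : Fin n) : 0 ≤ S i := by
  obtain ⟨k, hk⟩ := h i; rw [hk]; positivity

lemma zero_out {n : ℕ} (c : (Fin n → ℝ) → Fin n) (hmono : MonotoneEmptier n c)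
    (S : Fin n → ℝ) (hS : HalfState n S) (T : Finset (Fin n)) (hT : c S ∉ T) :
    c (fun k => if k ∈ T then 0 else S k) = c S := by
  induction T using Finset.induction_on with
  | empty => simp
  | @insert a s ha ih =>
    have hcS : c S ∉ s := fun h => hT (Finset.mem_insert_of_mem h)
    have hca : a ≠ c S := fun h => hT (h ▸ Finset.mem_insert_self a s)
    set S₁ : Fin n → ℝ := fun k => if k ∈ s then 0 else S k with hS₁def
    have hS₁ : HalfState n S₁ := by
      intro i
      by_cases h : i ∈ s
      · exact ⟨0, by simp [hS₁def, h]⟩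
      · obtain ⟨k, hk⟩ := hS i; exact ⟨k, by simp [hS₁def, h, hk]⟩
    set S₂ : Fin n → ℝ := fun k => if k ∈ insert a s then 0 else S k with hS₂def
    have hS₂ : HalfState n S₂ := by
      intro i
      by_cases h : i ∈ insert a s
      · exact ⟨0, by simp only [hS₂def]; rw [if_pos h]; norm_num⟩
      · obtain ⟨k, hk⟩ := hS i; exact ⟨k, by simp only [hS₂def]; rw [if_neg h, hk]⟩
    have h1 : c S₁ = c S := ih hcS
    have : c S₂ = c S₁ := by
      apply hmono S₁ S₂ hS₁ hS₂ a (by rw [h1]; exact hca)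
      · simp only [hS₂def, hS₁def, Finset.mem_insert_self, if_true]
        by_cases h : a ∈ s
        · simp [h]
        · simp [h, halfstate_nonneg hS a]
      · intro j hj
        simp only [hS₂def, hS₁def, Finset.mem_insert]
        by_cases h : j ∈ s
        · simp [h]
        · simp [h, hj]
    rw [this, h1]

/-- For a monotone stateless emptier, the selected cup dominates every other cup. -/
theorem stmt_5 (n : ℕ) (c : (Fin n → ℝ) → Fin n) (hmono : MonotoneEmptier n c) :
    ∀ S : Fin n → ℝ, HalfState n S → ∀ j' : Fin n, j' ≠ c S →
      Dominates n c (c S) (S (c S)) j' (S j') := by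
  intro S hS j' hj'
  have hne : c S ≠ j' := fun h => hj' h.symm
  rw [Dominates, if_neg hne]
  have key := zero_out c hmono S hS (Finset.univ \ {c S, j'}) (by simp)
  have : (fun k => if k ∈ Finset.univ \ ({c S, j'} : Finset (Fin n)) then 0 else S k)
      = twoCup n (c S) j' (S (c S)) (S j') := by
    funext k
    simp only [twoCup, Finset.mem_sdiff, Finset.mem_univ, Finset.mem_insert,
      Finset.mem_singleton, true_and]
    by_cases h1 : k = c S
    · simp [h1]
    · by_cases h2 : k = j' <;> simp [h1, h2, hj']
  rw [this] at key
  exact key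
end

section
/- Let c be a monotone stateless emptier on n cups that, in every state having at least one cup with positive fill, selects a cup with positive fill. Let (j_1, r_1), (j_2, r_2), (j_3, r_3) be pairs of cups and fills, where each r_i is a positive integer multiple of 1/2. If (j_1, r_1) dominates (j_2, r_2) and (j_2, r_2) dominates (j_3, r_3), then (j_1, r_1) dominates (j_3, r_3). -/
/-- The state with three designated cups filled. -/
def threeCup (n : ℕ) (j₁ j₂ j₃ : Fin n) (r₁ r₂ r₃ : ℝ) : Fin n → ℝ :=
  fun k => if k = j₁ then r₁ else if k = j₂ then r₂ else if k = j₃ then r₃ else 0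

lemma half_twoCup (n : ℕ) (j₁ j₂ : Fin n) (r₁ r₂ : ℝ)
    (h₁ : ∃ k : ℕ, r₁ = (k : ℝ) / 2) (h₂ : ∃ k : ℕ, r₂ = (k : ℝ) / 2) :
    HalfState n (twoCup n j₁ j₂ r₁ r₂) := by
  intro i
  unfold twoCup
  split_ifs
  · exact h₁
  · exact h₂
  · exact ⟨0, by norm_num⟩

lemma half_threeCup (n : ℕ) (j₁ j₂ j₃ : Fin n) (r₁ r₂ r₃ : ℝ)
    (h₁ : ∃ k : ℕ, r₁ = (k : ℝ) / 2) (h₂ : ∃ k : ℕ, r₂ = (k : ℝ) / 2)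
    (h₃ : ∃ k : ℕ, r₃ = (k : ℝ) / 2) :
    HalfState n (threeCup n j₁ j₂ j₃ r₁ r₂ r₃) := by
  intro i
  unfold threeCup
  split_ifs
  · exact h₁
  · exact h₂
  · exact h₃
  · exact ⟨0, by norm_num⟩

lemma twoCup_symm (n : ℕ) (j₁ j₂ : Fin n) (r₁ r₂ : ℝ) (h : j₁ ≠ j₂) :
    twoCup n j₁ j₂ r₁ r₂ = twoCup n j₂ j₁ r₂ r₁ := by
  funext k
  unfold twoCup
  by_cases h1 : k = j₁ <;> by_cases h2 : k = j₂ <;> simp_all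

/-- In a two-cup state with positive first fill, the selected cup is one of the two. -/
lemma twoCup_sel (n : ℕ) (c : (Fin n → ℝ) → Fin n)
    (hpos : ∀ S : Fin n → ℝ, HalfState n S → (∃ i, 0 < S i) → 0 < S (c S))
    (j₁ j₂ : Fin n) (r₁ r₂ : ℝ) (hr₁ : 0 < r₁)
    (h₁ : ∃ k : ℕ, r₁ = (k : ℝ) / 2) (h₂ : ∃ k : ℕ, r₂ = (k : ℝ) / 2) :
    c (twoCup n j₁ j₂ r₁ r₂) = j₁ ∨ c (twoCup n j₁ j₂ r₁ r₂) = j₂ := by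
  have hh := half_twoCup n j₁ j₂ r₁ r₂ h₁ h₂
  have h := hpos _ hh ⟨j₁, by simp [twoCup, hr₁]⟩
  unfold twoCup at h
  split_ifs at h with ha hb
  · exact Or.inl ha
  · exact Or.inr hb
  · exact absurd h (lt_irrefl 0)

/-- Domination is transitive, for any monotone stateless emptier that always selects a
cup with positive fill whenever one exists. -/
theorem stmt_6 (n : ℕ) (c : (Fin n → ℝ) → Fin n) (hmono : MonotoneEmptier n c)
    (hpos : ∀ S : Fin n → ℝ, HalfState n S → (∃ i, 0 < S i) → 0 < S (c S))
    (j₁ j₂ j₃ : Fin n) (r₁ r₂ r₃ : ℝ)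
    (h₁ : ∃ k : ℕ, r₁ = (k + 1 : ℝ) / 2) (h₂ : ∃ k : ℕ, r₂ = (k + 1 : ℝ) / 2)
    (h₃ : ∃ k : ℕ, r₃ = (k + 1 : ℝ) / 2)
    (h12 : Dominates n c j₁ r₁ j₂ r₂) (h23 : Dominates n c j₂ r₂ j₃ r₃) :
    Dominates n c j₁ r₁ j₃ r₃ := by
  obtain ⟨k₁, hk₁⟩ := h₁
  obtain ⟨k₂, hk₂⟩ := h₂
  obtain ⟨k₃, hk₃⟩ := h₃
  have hr₁ : 0 < r₁ := by rw [hk₁]; positivity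
  have hr₂ : 0 < r₂ := by rw [hk₂]; positivity
  have hr₃ : 0 < r₃ := by rw [hk₃]; positivity
  have hh₁ : ∃ k : ℕ, r₁ = (k : ℝ) / 2 := ⟨k₁ + 1, by rw [hk₁]; push_cast; ring⟩
  have hh₂ : ∃ k : ℕ, r₂ = (k : ℝ) / 2 := ⟨k₂ + 1, by rw [hk₂]; push_cast; ring⟩
  have hh₃ : ∃ k : ℕ, r₃ = (k : ℝ) / 2 := ⟨k₃ + 1, by rw [hk₃]; push_cast; ring⟩
  unfold Dominates at h12 h23 ⊢
  by_cases e12 : j₁ = j₂ <;> by_cases e23 : j₂ = j₃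
  · -- j₁ = j₂ = j₃
    rw [if_pos e12] at h12
    rw [if_pos e23] at h23
    rw [if_pos (e12.trans e23)]
    exact h23.trans h12
  · -- j₁ = j₂ ≠ j₃
    rw [if_pos e12] at h12
    rw [if_neg e23] at h23
    have e13 : j₁ ≠ j₃ := e12 ▸ e23
    rw [if_neg e13]
    by_contra hne
    have hc3 : c (twoCup n j₁ j₃ r₁ r₃) = j₃ :=
      (twoCup_sel n c hpos j₁ j₃ r₁ r₃ hr₁ hh₁ hh₃).resolve_left hne
    have hmo := hmono (twoCup n j₁ j₃ r₁ r₃) (twoCup n j₁ j₃ r₂ r₃)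
      (half_twoCup n j₁ j₃ r₁ r₃ hh₁ hh₃) (half_twoCup n j₁ j₃ r₂ r₃ hh₂ hh₃)
      j₁ (by rw [hc3]; exact e13)
      (by simp only [twoCup, if_pos rfl]; exact le_of_lt h12)
      (by intro j hj; simp [twoCup, hj])
    rw [hc3] at hmo
    rw [e12] at hmo
    rw [h23] at hmo
    exact e23 hmo
  · -- j₁ ≠ j₂ = j₃
    rw [if_neg e12] at h12
    rw [if_pos e23] at h23
    have e13 : j₁ ≠ j₃ := e23 ▸ e12
    rw [if_neg e13]
    have hmo := hmono (twoCup n j₁ j₂ r₁ r₂) (twoCup n j₁ j₂ r₁ r₃)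
      (half_twoCup n j₁ j₂ r₁ r₂ hh₁ hh₂) (half_twoCup n j₁ j₂ r₁ r₃ hh₁ hh₃)
      j₂ (by rw [h12]; exact Ne.symm e12)
      (by simp only [twoCup, if_neg (Ne.symm e12), if_pos rfl]; exact le_of_lt h23)
      (by intro j hj; simp [twoCup, hj])
    rw [← e23]
    exact hmo.trans h12
  · -- j₁ ≠ j₂, j₂ ≠ j₃
    rw [if_neg e12] at h12
    rw [if_neg e23] at h23
    by_cases e13 : j₁ = j₃
    · -- j₁ = j₃ : show r₃ < r₁
      rw [if_pos e13]
      by_contra hle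
      push_neg at hle
      have e32 : j₃ ≠ j₂ := by rw [← e13]; exact e12
      have hmo := hmono (twoCup n j₂ j₃ r₂ r₃) (twoCup n j₂ j₃ r₂ r₁)
        (half_twoCup n j₂ j₃ r₂ r₃ hh₂ hh₃) (half_twoCup n j₂ j₃ r₂ r₁ hh₂ hh₁)
        j₃ (by rw [h23]; exact e32)
        (by simp only [twoCup, if_neg e32, if_pos rfl]; exact hle)
        (by intro j hj; simp [twoCup, hj])
      rw [h23] at hmo
      rw [← e13, twoCup_symm n j₂ j₁ r₂ r₁ (Ne.symm e12), h12] at hmo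
      exact e12 hmo
    · -- all distinct
      have e21 : j₂ ≠ j₁ := Ne.symm e12
      have e31 : j₃ ≠ j₁ := Ne.symm e13
      have e32 : j₃ ≠ j₂ := Ne.symm e23
      have hhT : HalfState n (threeCup n j₁ j₂ j₃ r₁ r₂ r₃) :=
        half_threeCup n j₁ j₂ j₃ r₁ r₂ r₃ hh₁ hh₂ hh₃
      have hcT1 : c (threeCup n j₁ j₂ j₃ r₁ r₂ r₃) = j₁ := by
        have h3 : c (threeCup n j₁ j₂ j₃ r₁ r₂ r₃) ≠ j₃ := by
          intro h3
          have hmo := hmono (threeCup n j₁ j₂ j₃ r₁ r₂ r₃) (twoCup n j₂ j₃ r₂ r₃) hhT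
            (half_twoCup n j₂ j₃ r₂ r₃ hh₂ hh₃)
            j₁ (by rw [h3]; exact e13)
            (by simp only [threeCup, twoCup, if_pos rfl, if_neg e12, if_neg e13]
                exact le_of_lt hr₁)
            (by intro j hj
                by_cases hj2 : j = j₂ <;> by_cases hj3 : j = j₃ <;>
                  simp_all [twoCup, threeCup])
          rw [h23] at hmo
          rw [h3] at hmo
          exact e23 hmo
        have h2 : c (threeCup n j₁ j₂ j₃ r₁ r₂ r₃) ≠ j₂ := by
          intro h2
          have hmo := hmono (threeCup n j₁ j₂ j₃ r₁ r₂ r₃) (twoCup n j₁ j₂ r₁ r₂) hhT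
            (half_twoCup n j₁ j₂ r₁ r₂ hh₁ hh₂)
            j₃ (by rw [h2]; exact e32)
            (by simp only [threeCup, twoCup, if_neg e31, if_neg e32, if_pos rfl]
                exact le_of_lt hr₃)
            (by intro j hj
                by_cases hj1 : j = j₁ <;> by_cases hj2 : j = j₂ <;>
                  simp_all [twoCup, threeCup])
          rw [h12] at hmo
          rw [h2] at hmo
          exact e12 hmo
        have hTpos := hpos _ hhT ⟨j₁, by simp [threeCup, hr₁]⟩
        unfold threeCup at hTpos
        split_ifs at hTpos with ha hb hc
        · exact ha
        · exact absurd hb h2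
        · exact absurd hc h3
        · exact absurd hTpos (lt_irrefl 0)
      rw [if_neg e13]
      have hmo := hmono (threeCup n j₁ j₂ j₃ r₁ r₂ r₃) (twoCup n j₁ j₃ r₁ r₃) hhT
        (half_twoCup n j₁ j₃ r₁ r₃ hh₁ hh₃)
        j₂ (by rw [hcT1]; exact e21)
        (by simp only [threeCup, twoCup, if_neg e21, if_neg e23, if_pos rfl]
            exact le_of_lt hr₂)
        (by intro j hj
            by_cases hj1 : j = j₁ <;> by_cases hj3 : j = j₃ <;>
              simp_all [twoCup, threeCup])
      exact hmo.trans hcT1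
end

section
/- Let r_1,…,r_n be independent random variables, each uniformly distributed on [0,1), and let a_1,…,a_n and c_1,…,c_n be nonnegative real numbers. Define X_j = ⌊r_j + a_j + c_j⌋ − ⌊r_j + a_j⌋ − ⌊c_j⌋. Then almost surely each X_j ∈ {0,1}; moreover P(X_j = 1) = c_j − ⌊c_j⌋ for each j, and the random variables X_1,…,X_n are mutually independent. -/
open MeasureTheory ProbabilityTheory

lemma floor_sub_01 (x y : ℝ) : ⌊x + y⌋ - ⌊x⌋ - ⌊y⌋ = 0 ∨ ⌊x + y⌋ - ⌊x⌋ - ⌊y⌋ = 1 := by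
  have h1 : (⌊x⌋ : ℤ) + ⌊y⌋ ≤ ⌊x + y⌋ := by
    apply Int.le_floor.2
    push_cast
    exact add_le_add (Int.floor_le x) (Int.floor_le y)
  have h2 : ⌊x + y⌋ < ⌊x⌋ + ⌊y⌋ + 2 := by
    apply Int.floor_lt.2
    push_cast
    have := Int.lt_floor_add_one x
    have := Int.lt_floor_add_one y
    linarith
  omega

lemma floor_eq_one_iff (x y : ℝ) :
    ⌊x + y⌋ - ⌊x⌋ - ⌊y⌋ = 1 ↔ 1 ≤ Int.fract x + Int.fract y := by
  have hxy : x + y = ((⌊x⌋ + ⌊y⌋ : ℤ) : ℝ) + (Int.fract x + Int.fract y) := by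
    push_cast
    rw [Int.fract, Int.fract]; ring
  have hfl : ⌊x + y⌋ = ⌊x⌋ + ⌊y⌋ + ⌊Int.fract x + Int.fract y⌋ := by
    rw [hxy, Int.floor_intCast_add]
  have h0 : 0 ≤ Int.fract x + Int.fract y :=
    add_nonneg (Int.fract_nonneg x) (Int.fract_nonneg y)
  have h2 : Int.fract x + Int.fract y < 2 := by
    have := Int.fract_lt_one x
    have := Int.fract_lt_one y
    linarith
  rw [hfl]
  constructor
  · intro h
    have : ⌊Int.fract x + Int.fract y⌋ = 1 := by omega
    calc (1 : ℝ) = ((1 : ℤ) : ℝ) := by norm_num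
    _ ≤ _ := by rw [← this]; exact Int.floor_le _
  · intro h
    have : ⌊Int.fract x + Int.fract y⌋ = 1 := by
      rw [Int.floor_eq_iff]
      constructor
      · exact_mod_cast h
      · push_cast; linarith
    omega

lemma key_volume (α γ : ℝ) (hα0 : 0 ≤ α) (hα1 : α < 1) (hγ0 : 0 ≤ γ) (hγ1 : γ < 1) :
    volume {t ∈ Set.Ico (0 : ℝ) 1 | 1 ≤ Int.fract (t + α) + γ} = ENNReal.ofReal γ := by
  have hset : {t ∈ Set.Ico (0 : ℝ) 1 | 1 ≤ Int.fract (t + α) + γ} =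
      Set.Ico (max 0 (1 - γ - α)) (1 - α) ∪ Set.Ico (max (1 - α) (2 - γ - α)) 1 := by
    ext t
    simp only [Set.mem_setOf_eq, Set.mem_Ico, Set.mem_union, le_max_iff, max_le_iff,
      Set.mem_sep_iff]
    constructor
    · rintro ⟨⟨ht0, ht1⟩, hP⟩
      by_cases hcase : t + α < 1
      · left
        have hfr : Int.fract (t + α) = t + α := Int.fract_eq_self.2 ⟨by linarith, hcase⟩
        rw [hfr] at hP
        exact ⟨⟨ht0, by linarith⟩, by linarith⟩
      · right
        have hfr : Int.fract (t + α) = t + α - 1 := by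
          have : Int.fract (t + α - 1) = t + α - 1 :=
            Int.fract_eq_self.2 ⟨by linarith, by linarith⟩
          rw [← this, show t + α - 1 = t + α + (-1 : ℤ) by push_cast; ring,
            Int.fract_add_intCast]
        rw [hfr] at hP
        exact ⟨⟨by linarith, by linarith⟩, ht1⟩
    · rintro (⟨⟨h1, h2⟩, h3⟩ | ⟨⟨h1, h2⟩, h3⟩)
      · have hfr : Int.fract (t + α) = t + α := Int.fract_eq_self.2 ⟨by linarith, by linarith⟩
        exact ⟨⟨h1, by linarith⟩, by rw [hfr]; linarith⟩
      · have hfr : Int.fract (t + α) = t + α - 1 := by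
          have : Int.fract (t + α - 1) = t + α - 1 :=
            Int.fract_eq_self.2 ⟨by linarith, by linarith⟩
          rw [← this, show t + α - 1 = t + α + (-1 : ℤ) by push_cast; ring,
            Int.fract_add_intCast]
        exact ⟨⟨by linarith, h3⟩, by rw [hfr]; linarith⟩
  rw [hset]
  have hdisj : Disjoint (Set.Ico (max 0 (1 - γ - α)) (1 - α))
      (Set.Ico (max (1 - α) (2 - γ - α)) 1) := by
    apply Set.disjoint_left.2
    rintro t ⟨_, h1⟩ ⟨h2, _⟩
    exact absurd (h1.trans_le (le_max_left _ _ |>.trans h2)) (lt_irrefl t)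
  rw [measure_union hdisj measurableSet_Ico, Real.volume_Ico, Real.volume_Ico]
  by_cases hcase : α + γ ≤ 1
  · have h1 : max 0 (1 - γ - α) = 1 - γ - α := max_eq_right (by linarith)
    have h2 : max (1 - α) (2 - γ - α) = 2 - γ - α := max_eq_right (by linarith)
    rw [h1, h2, show 1 - α - (1 - γ - α) = γ by ring,
      ENNReal.ofReal_eq_zero.2 (by linarith : 1 - (2 - γ - α) ≤ 0), add_zero]
  · have h1 : max 0 (1 - γ - α) = 0 := max_eq_left (by linarith)
    have h2 : max (1 - α) (2 - γ - α) = 2 - γ - α := max_eq_right (by linarith)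
    rw [h1, h2, sub_zero, ← ENNReal.ofReal_add (by linarith) (by linarith)]
    congr 1; ring

/-- Counting threshold crossings: with `r j` independent uniform offsets on `[0,1)` and
fixed nonnegative `a j` (previously poured water) and `c j` (newly poured water), the
extra threshold-crossing counts `X j = ⌊r j + a j + c j⌋ − ⌊r j + a j⌋ − ⌊c j⌋` are
almost surely `{0,1}`-valued, satisfy `P(X j = 1) = c j − ⌊c j⌋`, and are mutually
independent. -/
theorem stmt_9 {Ω : Type*} [MeasurableSpace Ω] (μ : Measure Ω) [IsProbabilityMeasure μ]
    (n : ℕ) (r : Fin n → Ω → ℝ) (hmeas : ∀ j, Measurable (r j))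
    (hindep : iIndepFun r μ)
    (hunif : ∀ j, μ.map (r j) = volume.restrict (Set.Ico (0 : ℝ) 1))
    (a c : Fin n → ℝ) (ha : ∀ j, 0 ≤ a j) (hc : ∀ j, 0 ≤ c j)
    (X : Fin n → Ω → ℤ)
    (hX : ∀ j ω, X j ω = ⌊r j ω + a j + c j⌋ - ⌊r j ω + a j⌋ - ⌊c j⌋) :
    (∀ j, ∀ᵐ ω ∂μ, X j ω = 0 ∨ X j ω = 1) ∧
      (∀ j, μ {ω | X j ω = 1} = ENNReal.ofReal (c j - ⌊c j⌋)) ∧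
      iIndepFun X μ := by
  set g : Fin n → ℝ → ℤ := fun j t => ⌊t + a j + c j⌋ - ⌊t + a j⌋ - ⌊c j⌋ with hg
  have hgmeas : ∀ j, Measurable (g j) := by
    intro j
    exact (((measurable_id.add_const (a j)).add_const (c j)).floor.sub
      (measurable_id.add_const (a j)).floor).sub measurable_const
  have hXg : ∀ j, X j = g j ∘ r j := by
    intro j; funext ω; simp [hX j ω, hg]
  refine ⟨?_, ?_, ?_⟩
  · intro j
    filter_upwards with ω
    rw [hX j ω, show r j ω + a j + c j = (r j ω + a j) + c j by ring]
    exact floor_sub_01 _ _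
  · intro j
    have hs : {ω | X j ω = 1} = r j ⁻¹' {t | g j t = 1} := by
      ext ω; simp [hX j ω, hg]
    have hms : MeasurableSet {t | g j t = 1} := hgmeas j (measurableSet_singleton 1)
    rw [hs, ← Measure.map_apply (hmeas j) hms, hunif j, Measure.restrict_apply hms]
    have hseteq : {t | g j t = 1} ∩ Set.Ico (0 : ℝ) 1 =
        {t ∈ Set.Ico (0 : ℝ) 1 | 1 ≤ Int.fract (t + Int.fract (a j)) + Int.fract (c j)} := by
      ext t
      simp only [Set.mem_inter_iff, Set.mem_setOf_eq, Set.mem_sep_iff, hg]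
      rw [show t + a j + c j = (t + a j) + c j by ring, floor_eq_one_iff]
      have : Int.fract (t + a j) = Int.fract (t + Int.fract (a j)) := by
        rw [show t + a j = t + Int.fract (a j) + (⌊a j⌋ : ℤ) by rw [Int.fract]; push_cast; ring,
          Int.fract_add_intCast]
      rw [this]; tauto
    rw [hseteq, key_volume _ _ (Int.fract_nonneg _) (Int.fract_lt_one _)
      (Int.fract_nonneg _) (Int.fract_lt_one _)]
    rfl
  · have := hindep.comp g hgmeas
    have hXeq : X = fun j => g j ∘ r j := funext hXg
    rw [hXeq]; exact this
end

section
/- Let r_1,…,r_n and p_1,…,p_n be 2n mutually independent random variables, each uniformly distributed on [0,1); let a_1,…,a_n and c_1,…,c_n be nonnegative reals; let q ≥ 1 be an integer and ℓ ∈ {1,…,q}; and set s = ∑_{j=1}^n min(c_j, 1). Let Y be the number of indices j such that ⌊q·p_j⌋ + 1 = ℓ and ⌊r_j + a_j + c_j⌋ ≥ ⌊r_j + a_j⌋ + 1. Then P(Y < s/(2q)) ≤ exp(−s/(8q)). -/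
open MeasureTheory ProbabilityTheory

lemma measA (a : ℝ) : Measurable fun y : ℝ => ⌊y + a⌋ :=
  (measurable_id.add_const a).floor

lemma measASet (a c : ℝ) : MeasurableSet {y : ℝ | ⌊y + a⌋ + 1 ≤ ⌊y + a + c⌋} := by
  have h : Measurable fun y : ℝ => ⌊y + a + c⌋ - ⌊y + a⌋ := by
    have h1 : Measurable fun y : ℝ => ⌊y + a + c⌋ := by
      have := measA (a + c)
      simpa [add_assoc] using this
    exact h1.sub (measA a)
  have : {y : ℝ | ⌊y + a⌋ + 1 ≤ ⌊y + a + c⌋} =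
      (fun y : ℝ => ⌊y + a + c⌋ - ⌊y + a⌋) ⁻¹' (Set.Ici 1) := by
    ext y; simp [Set.mem_Ici]; omega
  rw [this]
  exact h measurableSet_Ici

-- measure of crossing event
lemma volA (a c : ℝ) (hc : 0 ≤ c) :
    volume.restrict (Set.Ico (0:ℝ) 1) {y : ℝ | ⌊y + a⌋ + 1 ≤ ⌊y + a + c⌋} =
      ENNReal.ofReal (min c 1) := by
  rw [Measure.restrict_apply (measASet a c)]
  set f : ℝ := Int.fract a with hf
  have hf0 : 0 ≤ f := Int.fract_nonneg a
  have hf1 : f < 1 := Int.fract_lt_one a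
  have hfa : a = ⌊a⌋ + f := (Int.floor_add_fract a).symm
  have hsplit : {y : ℝ | ⌊y + a⌋ + 1 ≤ ⌊y + a + c⌋} ∩ Set.Ico (0:ℝ) 1 =
      Set.Ico (max 0 (1 - f - c)) (1 - f) ∪ Set.Ico (max (1 - f) (2 - f - c)) 1 := by
    ext y
    simp only [Set.mem_inter_iff, Set.mem_setOf_eq, Set.mem_Ico, Set.mem_union]
    constructor
    · rintro ⟨h1, h2, h3⟩
      rcases lt_or_ge y (1 - f) with hy | hy
      · left
        have hfl : ⌊y + a⌋ = ⌊a⌋ := by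
          apply Int.floor_eq_iff.mpr
          constructor <;> push_cast <;> linarith
        have h4 : ((⌊a⌋:ℝ) + 1) ≤ y + a + c := by
          have h5 := Int.le_floor.mp h1
          rw [hfl] at h5
          have hle := Int.floor_le (y + a + c)
          push_cast at h5
          linarith
        exact ⟨max_le h2 (by linarith), hy⟩
      · right
        have hfl : ⌊y + a⌋ = ⌊a⌋ + 1 := by
          apply Int.floor_eq_iff.mpr
          constructor <;> push_cast <;> linarith
        have h4 : ((⌊a⌋:ℝ) + 2) ≤ y + a + c := by
          have h5 := Int.le_floor.mp h1
          rw [hfl] at h5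
          have hle := Int.floor_le (y + a + c)
          push_cast at h5
          linarith
        exact ⟨max_le hy (by linarith), h3⟩
    · rintro (⟨hy0, hy1⟩ | ⟨hy0, hy1⟩)
      · rw [max_le_iff] at hy0
        obtain ⟨hy0a, hy0b⟩ := hy0
        have hy1' : y < 1 := by linarith
        have hfl : ⌊y + a⌋ = ⌊a⌋ := by
          apply Int.floor_eq_iff.mpr
          constructor <;> push_cast <;> linarith
        refine ⟨?_, hy0a, hy1'⟩
        rw [hfl]
        apply Int.le_floor.mpr
        push_cast
        linarith
      · rw [max_le_iff] at hy0
        obtain ⟨hy0a, hy0b⟩ := hy0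
        have hy0' : 0 ≤ y := by linarith
        have hfl : ⌊y + a⌋ = ⌊a⌋ + 1 := by
          apply Int.floor_eq_iff.mpr
          constructor <;> push_cast <;> linarith
        refine ⟨?_, hy0', hy1⟩
        rw [hfl]
        apply Int.le_floor.mpr
        push_cast
        linarith
  rw [hsplit]
  have hdisj : Disjoint (Set.Ico (max 0 (1 - f - c)) (1 - f))
      (Set.Ico (max (1 - f) (2 - f - c)) 1) := by
    rw [Set.disjoint_left]
    rintro x ⟨_, hx2⟩ ⟨hx3, _⟩
    exact absurd ((le_max_left _ _).trans hx3) (not_le.mpr hx2)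
  rw [measure_union hdisj measurableSet_Ico, Real.volume_Ico, Real.volume_Ico]
  rcases le_or_gt c (1 - f) with h1 | h1
  · have hm : max (1 - f) (2 - f - c) = 2 - f - c := max_eq_right (by linarith)
    have h0 : max 0 (1 - f - c) = 1 - f - c := max_eq_right (by linarith)
    rw [hm, h0, ENNReal.ofReal_eq_zero.mpr (by linarith : (1:ℝ) - (2 - f - c) ≤ 0), add_zero]
    congr 1
    rw [min_eq_left (by linarith)]
    ring
  · have h0 : max 0 (1 - f - c) = 0 := max_eq_left (by linarith)
    rcases le_or_gt c 1 with h2 | h2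
    · have hm : max (1 - f) (2 - f - c) = 2 - f - c := max_eq_right (by linarith)
      rw [h0, hm, ← ENNReal.ofReal_add (by linarith) (by linarith)]
      congr 1
      rw [min_eq_left h2]
      ring
    · have hm : max (1 - f) (2 - f - c) = 1 - f := max_eq_left (by linarith)
      rw [h0, hm, ← ENNReal.ofReal_add (by linarith) (by linarith)]
      congr 1
      rw [min_eq_right (by linarith)]
      ring
-- measure of priority event
lemma volB (q ℓ : ℕ) (hℓ : 1 ≤ ℓ) (hℓq : ℓ ≤ q) :
    volume.restrict (Set.Ico (0:ℝ) 1) {x : ℝ | ⌊(q:ℝ) * x⌋ + 1 = (ℓ:ℤ)} =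
      ENNReal.ofReal (1 / q) := by
  have hq0 : (0:ℝ) < q := by exact_mod_cast lt_of_lt_of_le hℓ hℓq
  have hmeas : MeasurableSet {x : ℝ | ⌊(q:ℝ) * x⌋ + 1 = (ℓ:ℤ)} := by
    have : Measurable fun x : ℝ => ⌊(q:ℝ) * x⌋ := (measurable_const.mul measurable_id).floor
    exact (this.add measurable_const) (measurableSet_singleton (ℓ:ℤ))
  rw [Measure.restrict_apply hmeas]
  have hset : {x : ℝ | ⌊(q:ℝ) * x⌋ + 1 = (ℓ:ℤ)} ∩ Set.Ico (0:ℝ) 1 =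
      Set.Ico ((ℓ - 1 : ℝ)/q) ((ℓ:ℝ)/q) := by
    ext x
    simp only [Set.mem_inter_iff, Set.mem_setOf_eq, Set.mem_Ico]
    constructor
    · rintro ⟨h1, h2, h3⟩
      have hfl : ⌊(q:ℝ) * x⌋ = (ℓ:ℤ) - 1 := by omega
      have h4 : ((ℓ:ℝ) - 1) ≤ (q:ℝ) * x := by
        have := Int.floor_le ((q:ℝ) * x); rw [hfl] at this; push_cast at this; linarith
      have h5 : (q:ℝ) * x < (ℓ:ℝ) := by
        have := Int.lt_floor_add_one ((q:ℝ) * x); rw [hfl] at this; push_cast at this; linarith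
      constructor
      · rw [div_le_iff₀ hq0]; linarith
      · rw [lt_div_iff₀ hq0]; linarith
    · rintro ⟨h1, h2⟩
      rw [div_le_iff₀ hq0] at h1
      rw [lt_div_iff₀ hq0] at h2
      have hfl : ⌊(q:ℝ) * x⌋ = (ℓ:ℤ) - 1 := by
        apply Int.floor_eq_iff.mpr
        constructor <;> push_cast <;> linarith
      have hx0 : 0 ≤ x := by
        by_contra h
        push_neg at h
        have h1' : (ℓ:ℝ) - 1 ≤ (q:ℝ) * x := by linarith
        have : (q:ℝ) * x < 0 := mul_neg_of_pos_of_neg hq0 h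
        have hℓ1 : (1:ℝ) ≤ (ℓ:ℝ) := by exact_mod_cast hℓ
        nlinarith
      have hx1 : x < 1 := by
        have hℓq' : (ℓ:ℝ) ≤ (q:ℝ) := by exact_mod_cast hℓq
        nlinarith
      exact ⟨by omega, hx0, hx1⟩
  rw [hset, Real.volume_Ico]
  congr 1
  field_simp
  ring
lemma indep_aux {Ω : Type*} [MeasurableSpace Ω] (μ : Measure Ω)
    (n : ℕ) (u : (Fin n ⊕ Fin n) → Ω → ℝ) (hmeas : ∀ i, Measurable (u i))
    (hindep : iIndepFun u μ)
    (D : Fin n → Set (ℝ × ℝ)) (hD : ∀ j, MeasurableSet (D j))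
    (i : Fin n) (s : Finset (Fin n)) (his : i ∉ s) :
    IndepFun (fun ω => ((D i).indicator 1 (u (Sum.inr i) ω, u (Sum.inl i) ω) : ℝ))
      (fun ω => (∑ j ∈ s, (D j).indicator 1 (u (Sum.inr j) ω, u (Sum.inl j) ω) : ℝ)) μ := by
  classical
  set S₁ : Finset (Fin n ⊕ Fin n) := {Sum.inl i, Sum.inr i} with hS₁
  set S₂ : Finset (Fin n ⊕ Fin n) := s.image Sum.inl ∪ s.image Sum.inr with hS₂
  have hd : Disjoint S₁ S₂ := by
    rw [Finset.disjoint_left]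
    intro x hx1 hx2
    rw [hS₁, Finset.mem_insert, Finset.mem_singleton] at hx1
    rw [hS₂, Finset.mem_union, Finset.mem_image, Finset.mem_image] at hx2
    rcases hx1 with rfl | rfl <;>
      rcases hx2 with ⟨j, hj, hje⟩ | ⟨j, hj, hje⟩ <;>
        first
          | (cases hje; exact his hj)
          | exact absurd hje (by simp)
  have h0 := hindep.indepFun_finset S₁ S₂ hd hmeas
  have hinl : (Sum.inl i : Fin n ⊕ Fin n) ∈ S₁ := by simp [hS₁]
  have hinr : (Sum.inr i : Fin n ⊕ Fin n) ∈ S₁ := by simp [hS₁]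
  set φ : (S₁ → ℝ) → ℝ :=
    fun v => (D i).indicator 1 (v ⟨Sum.inr i, hinr⟩, v ⟨Sum.inl i, hinl⟩) with hφdef
  have hφ : Measurable φ :=
    (measurable_one.indicator (hD i)).comp
      ((measurable_pi_apply _).prodMk (measurable_pi_apply _))
  set ψ : (S₂ → ℝ) → ℝ :=
    fun v => ∑ j ∈ s.attach,
      (D j.1).indicator 1
        (v ⟨Sum.inr j.1, by simp [hS₂, j.2]⟩,
         v ⟨Sum.inl j.1, by simp [hS₂, j.2]⟩) with hψdef
  have hψ : Measurable ψ := by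
    apply Finset.measurable_sum
    intro j _
    exact (measurable_one.indicator (hD j.1)).comp
      ((measurable_pi_apply _).prodMk (measurable_pi_apply _))
  have h1 := h0.comp hφ hψ
  have e1 : (φ ∘ fun ω (k : S₁) => u k ω) =
      fun ω => (D i).indicator 1 (u (Sum.inr i) ω, u (Sum.inl i) ω) := rfl
  have e2 : (ψ ∘ fun ω (k : S₂) => u k ω) =
      fun ω => ∑ j ∈ s, (D j).indicator 1 (u (Sum.inr j) ω, u (Sum.inl j) ω) := by
    funext ω
    show ∑ j ∈ s.attach, _ = _
    rw [← Finset.sum_attach s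
      (fun j => (D j).indicator 1 (u (Sum.inr j) ω, u (Sum.inl j) ω))]
  rw [e1, e2] at h1
  exact h1
lemma measBSet (q : ℕ) (ℓ : ℕ) : MeasurableSet {x : ℝ | ⌊(q:ℝ) * x⌋ + 1 = (ℓ:ℤ)} := by
  have : Measurable fun x : ℝ => ⌊(q:ℝ) * x⌋ := (measurable_const.mul measurable_id).floor
  exact (this.add measurable_const) (measurableSet_singleton (ℓ:ℤ))


/-- Influence property, part 1: with offsets `u (inl j)` and priorities `u (inr j)` forming
`2n` mutually independent uniform `[0,1)` random variables, the number `Y` of cups of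
priority level `ℓ` that cross at least one threshold satisfies
`P(Y < s/(2q)) ≤ exp(−s/(8q))`, where `s = ∑ j min (c j) 1`. -/
theorem stmt_10 {Ω : Type*} [MeasurableSpace Ω] (μ : Measure Ω) [IsProbabilityMeasure μ]
    (n : ℕ) (u : (Fin n ⊕ Fin n) → Ω → ℝ) (hmeas : ∀ i, Measurable (u i))
    (hindep : iIndepFun u μ)
    (hunif : ∀ i, μ.map (u i) = volume.restrict (Set.Ico (0 : ℝ) 1))
    (a c : Fin n → ℝ) (ha : ∀ j, 0 ≤ a j) (hc : ∀ j, 0 ≤ c j)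
    (q : ℕ) (hq : 1 ≤ q) (ℓ : ℕ) (hℓ : 1 ≤ ℓ) (hℓq : ℓ ≤ q)
    (s : ℝ) (hs : s = ∑ j, min (c j) 1) :
    μ {ω | (Set.ncard {j : Fin n |
          ⌊(q : ℝ) * u (Sum.inr j) ω⌋ + 1 = (ℓ : ℤ) ∧
          ⌊u (Sum.inl j) ω + a j⌋ + 1 ≤ ⌊u (Sum.inl j) ω + a j + c j⌋} : ℝ) <
        s / (2 * q)} ≤ ENNReal.ofReal (Real.exp (-s / (8 * q))) := by
  classical
  have hq0 : (0:ℝ) < q := by exact_mod_cast hq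
  -- the basic sets
  set Bs : Set ℝ := {x : ℝ | ⌊(q:ℝ) * x⌋ + 1 = (ℓ:ℤ)} with hBsdef
  set As : Fin n → Set ℝ := fun j => {y : ℝ | ⌊y + a j⌋ + 1 ≤ ⌊y + a j + c j⌋} with hAsdef
  set D : Fin n → Set (ℝ × ℝ) := fun j => Bs ×ˢ As j with hDdef
  have hD : ∀ j, MeasurableSet (D j) := fun j => (measBSet q ℓ).prod (measASet (a j) (c j))
  -- the indicator variables
  set X : Fin n → Ω → ℝ :=
    fun j ω => (D j).indicator 1 (u (Sum.inr j) ω, u (Sum.inl j) ω) with hXdef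
  have hX : ∀ j, Measurable (X j) := fun j =>
    (measurable_one.indicator (hD j)).comp
      ((hmeas (Sum.inr j)).prodMk (hmeas (Sum.inl j)))
  have hX01 : ∀ j ω, X j ω = 0 ∨ X j ω = 1 := by
    intro j ω
    by_cases h : (u (Sum.inr j) ω, u (Sum.inl j) ω) ∈ D j
    · right; simp [hXdef, Set.indicator_of_mem h]
    · left; simp [hXdef, Set.indicator_of_notMem h]
  have hXnn : ∀ j ω, 0 ≤ X j ω := by
    intro j ω; rcases hX01 j ω with h | h <;> rw [h] <;> norm_num
  -- probabilities
  set p : Fin n → ℝ := fun j => min (c j) 1 / q with hpdef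
  have hp0 : ∀ j, 0 ≤ p j := fun j => div_nonneg (le_min (hc j) zero_le_one) hq0.le
  have hp1 : ∀ j, p j ≤ 1 := by
    intro j
    rw [hpdef, div_le_one hq0]
    exact le_trans (min_le_right _ _) (by exact_mod_cast hq)
  -- the event sets and their measure
  set E : Fin n → Set Ω := fun j =>
    u (Sum.inr j) ⁻¹' Bs ∩ u (Sum.inl j) ⁻¹' (As j) with hEdef
  have hEmeas : ∀ j, MeasurableSet (E j) := fun j =>
    ((hmeas _) (measBSet q ℓ)).inter ((hmeas _) (measASet (a j) (c j)))
  have hμE : ∀ j, μ (E j) = ENNReal.ofReal (p j) := by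
    intro j
    have hij : (Sum.inr j : Fin n ⊕ Fin n) ≠ Sum.inl j := by simp
    have hI : IndepFun (u (Sum.inr j)) (u (Sum.inl j)) μ := hindep.indepFun hij
    rw [hEdef]
    have := hI.measure_inter_preimage_eq_mul Bs (As j) (measBSet q ℓ) (measASet (a j) (c j))
    rw [this]
    rw [← Measure.map_apply (hmeas (Sum.inr j)) (measBSet q ℓ),
      ← Measure.map_apply (hmeas (Sum.inl j)) (measASet (a j) (c j)),
      hunif, hunif, volB q ℓ hℓ hℓq, volA (a j) (c j) (hc j),
      ← ENNReal.ofReal_mul (by positivity)]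
    congr 1
    rw [hpdef]
    field_simp
  -- relating X to E
  have hXE : ∀ j ω, X j ω = (E j).indicator 1 ω := by
    intro j ω
    by_cases h : ω ∈ E j
    · rw [Set.indicator_of_mem h]
      obtain ⟨h1, h2⟩ := h
      have hm : (u (Sum.inr j) ω, u (Sum.inl j) ω) ∈ D j := ⟨h1, h2⟩
      rw [hXdef]
      simp only
      rw [Set.indicator_of_mem hm]
      rfl
    · rw [Set.indicator_of_notMem h]
      rw [hXdef]
      simp only
      rw [Set.indicator_of_notMem]
      intro hmem
      exact h ⟨hmem.1, hmem.2⟩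
  -- choice of t
  set t : ℝ := -Real.log 2 with htdef
  have ht : t ≤ 0 := neg_nonpos.mpr (Real.log_nonneg one_le_two)
  have hexpt : Real.exp t = 1/2 := by
    rw [htdef, Real.exp_neg, Real.exp_log (by norm_num : (0:ℝ) < 2)]
    norm_num
  -- integral of each factor
  have hIntj : ∀ j, ∫ ω, Real.exp (t * X j ω) ∂μ = 1 - p j / 2 := by
    intro j
    have heq : (fun ω => Real.exp (t * X j ω)) =
        fun ω => (E j).indicator (fun _ => Real.exp t - 1) ω + 1 := by
      funext ω
      rw [hXE j ω]
      by_cases h : ω ∈ E j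
      · rw [Set.indicator_of_mem h, Set.indicator_of_mem h]
        simp [mul_one]
      · rw [Set.indicator_of_notMem h, Set.indicator_of_notMem h]
        simp
    rw [heq, integral_add ((integrable_const _).indicator (hEmeas j)) (integrable_const 1),
      integral_indicator_const _ (hEmeas j), integral_const]
    simp only [smul_eq_mul, probReal_univ, ENNReal.toReal_one, mul_one]
    rw [measureReal_def, hμE j, ENNReal.toReal_ofReal (hp0 j), hexpt]
    ring
  -- factorization of the mgf over finsets
  have hfact : ∀ S : Finset (Fin n),
      ∫ ω, Real.exp (t * ∑ j ∈ S, X j ω) ∂μ = ∏ j ∈ S, ∫ ω, Real.exp (t * X j ω) ∂μ := by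
    intro S
    induction S using Finset.induction_on with
    | empty => simp
    | @insert i S his ih =>
      rw [Finset.prod_insert his, ← ih]
      have hI : IndepFun (X i) (fun ω => ∑ j ∈ S, X j ω) μ :=
        indep_aux μ n u hmeas hindep D hD i S his
      have hIexp : IndepFun (fun ω => Real.exp (t * X i ω))
          (fun ω => Real.exp (t * ∑ j ∈ S, X j ω)) μ :=
        hI.comp (Real.measurable_exp.comp (measurable_const.mul measurable_id))
          (Real.measurable_exp.comp (measurable_const.mul measurable_id))
      have hm1 : AEMeasurable (fun ω => Real.exp (t * X i ω)) μ :=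
        ((Real.measurable_exp.comp (measurable_const.mul (hX i)))).aemeasurable
      have hm2 : AEMeasurable (fun ω => Real.exp (t * ∑ j ∈ S, X j ω)) μ := by
        have : Measurable fun ω => ∑ j ∈ S, X j ω := Finset.measurable_sum S fun j _ => hX j
        exact ((Real.measurable_exp.comp (measurable_const.mul this))).aemeasurable
      have hmul := hIexp.integral_fun_mul_eq_mul_integral
        hm1.aestronglyMeasurable hm2.aestronglyMeasurable
      have : ∫ ω, Real.exp (t * ∑ j ∈ insert i S, X j ω) ∂μ =
          ∫ ω, Real.exp (t * X i ω) * Real.exp (t * ∑ j ∈ S, X j ω) ∂μ := by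
        congr 1
        funext ω
        rw [Finset.sum_insert his, mul_add, Real.exp_add]
      rw [this]
      calc ∫ ω, Real.exp (t * X i ω) * Real.exp (t * ∑ j ∈ S, X j ω) ∂μ
          = ∫ ω, ((fun ω => Real.exp (t * X i ω)) * fun ω => Real.exp (t * ∑ j ∈ S, X j ω)) ω ∂μ := by
            simp [Pi.mul_apply]
        _ = (∫ ω, Real.exp (t * X i ω) ∂μ) * ∫ ω, Real.exp (t * ∑ j ∈ S, X j ω) ∂μ := hmul

  -- Y and the event
  set Y : Ω → ℝ := fun ω => ∑ j, X j ω with hYdef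
  have hYmeas : Measurable Y := Finset.measurable_sum _ fun j _ => hX j
  have hYnn : ∀ ω, 0 ≤ Y ω := fun ω => Finset.sum_nonneg fun j _ => hXnn j ω
  set ε : ℝ := s / (2 * q) with hεdef
  have hint : Integrable (fun ω => Real.exp (t * Y ω)) μ := by
    apply (integrable_const (1:ℝ)).mono'
    · exact (Real.measurable_exp.comp (measurable_const.mul hYmeas)).aestronglyMeasurable
    · filter_upwards with ω
      rw [Real.norm_eq_abs, abs_of_pos (Real.exp_pos _)]
      exact Real.exp_le_one_iff.mpr (mul_nonpos_of_nonpos_of_nonneg ht (hYnn ω))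
  have hmarkov := measure_le_le_exp_mul_mgf (μ := μ) (X := Y) (t := t) ε ht hint
  have hmgf : mgf Y μ t = ∏ j, (1 - p j / 2) := by
    have h0 : mgf Y μ t = ∫ ω, Real.exp (t * Y ω) ∂μ := rfl
    rw [h0]
    have h1 : (fun ω => Real.exp (t * Y ω)) =
        fun ω => Real.exp (t * ∑ j ∈ Finset.univ, X j ω) := rfl
    rw [h1, hfact Finset.univ]
    exact Finset.prod_congr rfl fun j _ => hIntj j
  have hsump : ∑ j, p j = s / q := by
    rw [hs, hpdef, Finset.sum_div]
  have hprod : ∏ j, (1 - p j / 2) ≤ Real.exp (-(s/q)/2) := by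
    calc ∏ j, (1 - p j / 2)
        ≤ ∏ j, Real.exp (-(p j)/2) := by
          apply Finset.prod_le_prod
          · intro j _
            have := hp1 j
            linarith
          · intro j _
            have := Real.add_one_le_exp (-(p j)/2)
            linarith
      _ = Real.exp (∑ j, -(p j)/2) := (Real.exp_sum _ _).symm
      _ = Real.exp (-(s/q)/2) := by
          congr 1
          rw [← hsump]
          rw [← Finset.sum_neg_distrib, Finset.sum_div]
  have hsnn : 0 ≤ s := by
    rw [hs]
    exact Finset.sum_nonneg fun j _ => le_min (hc j) zero_le_one
  have hfin : Real.exp (-t * ε) * Real.exp (-(s/q)/2) ≤ Real.exp (-s/(8*q)) := by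
    rw [← Real.exp_add]
    apply Real.exp_le_exp.mpr
    have hlog2 : Real.log 2 < 0.6931471808 := Real.log_two_lt_d9
    have hlog2nn : 0 ≤ Real.log 2 := Real.log_nonneg one_le_two
    have hsq : 0 ≤ s / q := div_nonneg hsnn hq0.le
    have hε2 : ε = (s/q)/2 := by rw [hεdef]; ring
    rw [htdef, hε2, neg_neg]
    have h34 : Real.log 2 ≤ 3/4 := by linarith
    have hmul : Real.log 2 * ((s/q)/2) ≤ (3/4) * ((s/q)/2) :=
      mul_le_mul_of_nonneg_right h34 (by linarith)
    have hgoal : -s/(8*(q:ℝ)) = -((s/q)/8) := by ring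
    rw [hgoal]
    linarith
  have hcard : ∀ ω, Y ω = ((Set.ncard {j : Fin n |
      ⌊(q : ℝ) * u (Sum.inr j) ω⌋ + 1 = (ℓ : ℤ) ∧
      ⌊u (Sum.inl j) ω + a j⌋ + 1 ≤ ⌊u (Sum.inl j) ω + a j + c j⌋}) : ℝ) := by
    intro ω
    have hXif : ∀ j, X j ω = if (⌊(q : ℝ) * u (Sum.inr j) ω⌋ + 1 = (ℓ : ℤ) ∧
        ⌊u (Sum.inl j) ω + a j⌋ + 1 ≤ ⌊u (Sum.inl j) ω + a j + c j⌋) then (1:ℝ) else 0 := by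
      intro j
      rw [hXdef]
      simp only
      rw [Set.indicator_apply]
      refine if_congr ?_ rfl rfl
      rw [hDdef]
      simp only [Set.mem_prod, hBsdef, hAsdef, Set.mem_setOf_eq]
    have h1 : {j : Fin n | ⌊(q : ℝ) * u (Sum.inr j) ω⌋ + 1 = (ℓ : ℤ) ∧
        ⌊u (Sum.inl j) ω + a j⌋ + 1 ≤ ⌊u (Sum.inl j) ω + a j + c j⌋}.ncard
        = (Finset.univ.filter (fun j : Fin n =>
            ⌊(q : ℝ) * u (Sum.inr j) ω⌋ + 1 = (ℓ : ℤ) ∧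
            ⌊u (Sum.inl j) ω + a j⌋ + 1 ≤ ⌊u (Sum.inl j) ω + a j + c j⌋)).card := by
      rw [Set.ncard_eq_toFinset_card', Set.toFinset_setOf]
    rw [h1, hYdef]
    simp only
    rw [Finset.sum_congr rfl fun j _ => hXif j, Finset.sum_boole]
  have hsub : {ω | (Set.ncard {j : Fin n |
      ⌊(q : ℝ) * u (Sum.inr j) ω⌋ + 1 = (ℓ : ℤ) ∧
      ⌊u (Sum.inl j) ω + a j⌋ + 1 ≤ ⌊u (Sum.inl j) ω + a j + c j⌋} : ℝ) < ε} ⊆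
      {ω | Y ω ≤ ε} := by
    intro ω hω
    rw [Set.mem_setOf_eq] at hω ⊢
    rw [hcard ω]
    exact hω.le
  calc μ {ω | (Set.ncard {j : Fin n |
          ⌊(q : ℝ) * u (Sum.inr j) ω⌋ + 1 = (ℓ : ℤ) ∧
          ⌊u (Sum.inl j) ω + a j⌋ + 1 ≤ ⌊u (Sum.inl j) ω + a j + c j⌋} : ℝ) < ε}
      ≤ μ {ω | Y ω ≤ ε} := measure_mono hsub
    _ = ENNReal.ofReal ((μ {ω | Y ω ≤ ε}).toReal) :=
        (ENNReal.ofReal_toReal (measure_ne_top μ _)).symm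
    _ ≤ ENNReal.ofReal (Real.exp (-t * ε) * mgf Y μ t) := ENNReal.ofReal_le_ofReal hmarkov
    _ ≤ ENNReal.ofReal (Real.exp (-s / (8 * q))) := by
        apply ENNReal.ofReal_le_ofReal
        calc Real.exp (-t * ε) * mgf Y μ t
            = Real.exp (-t * ε) * ∏ j, (1 - p j / 2) := by rw [hmgf]
          _ ≤ Real.exp (-t * ε) * Real.exp (-(s/q)/2) :=
              mul_le_mul_of_nonneg_left hprod (Real.exp_pos _).le
          _ ≤ Real.exp (-s/(8*q)) := hfin
end

section
/- Let r_1,…,r_n be independent random variables, each uniformly distributed on [0,1); let a_1,…,a_n and c_1,…,c_n be nonnegative reals; and set s = ∑_{j=1}^n min(c_j, 1). Let T = ∑_{j=1}^n (⌊r_j + a_j + c_j⌋ − ⌊r_j + a_j⌋). Then E[T] = ∑_{j=1}^n c_j, and for every δ ∈ (0,1), P(|T − ∑_{j=1}^n c_j| ≥ δ·s) ≤ 2·exp(−δ²·s/3). -/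
open MeasureTheory ProbabilityTheory Set Real

lemma floor_diff_two_valued (u c : ℝ) :
    ⌊u + c⌋ - ⌊u⌋ = ⌊c⌋ ∨ ⌊u + c⌋ - ⌊u⌋ = ⌊c⌋ + 1 := by
  have h1 : ⌊u + c⌋ = ⌊u⌋ + ⌊Int.fract u + c⌋ := by
    conv_lhs => rw [← Int.floor_add_fract u, add_assoc, Int.floor_intCast_add]
  have h2 : (⌊c⌋ : ℤ) ≤ ⌊Int.fract u + c⌋ := by
    apply Int.floor_le_floor
    have := Int.fract_nonneg u
    linarith
  have h3 : ⌊Int.fract u + c⌋ < ⌊c⌋ + 2 := by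
    rw [show (⌊c⌋ + 2 : ℤ) = (⌊c⌋ + 2 : ℤ) from rfl, Int.floor_lt]
    have := Int.fract_lt_one u
    have := Int.lt_floor_add_one c
    push_cast
    linarith
  rw [h1, show ⌊u⌋ + ⌊Int.fract u + c⌋ - ⌊u⌋ = ⌊Int.fract u + c⌋ by ring]
  rcases eq_or_lt_of_le h2 with h | h
  · exact Or.inl h.symm
  · exact Or.inr (le_antisymm (Int.lt_add_one_iff.mp (by linarith : ⌊Int.fract u + c⌋ < ⌊c⌋ + 1 + 1)) (Int.lt_iff_add_one_le.mp h))

lemma log_one_add_ge (x : ℝ) (hx0 : 0 ≤ x) (hx1 : x ≤ 1) :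
    x * Real.log 2 ≤ Real.log (1 + x) := by
  have hcc := strictConcaveOn_log_Ioi.concaveOn
  have h := hcc.2 (Set.mem_Ioi.2 (by norm_num : (0:ℝ) < 1))
    (Set.mem_Ioi.2 (by norm_num : (0:ℝ) < 2)) (by linarith : (0:ℝ) ≤ 1 - x) hx0 (by ring)
  simp only [smul_eq_mul, Real.log_one, mul_zero, mul_one, zero_add] at h
  have e : (1:ℝ) - x + x * 2 = 1 + x := by ring
  rwa [e] at h

lemma mul_log_ge_aux (x : ℝ) (hx0 : 0 ≤ x) (hx1 : x ≤ 1) :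
    x + x ^ 2 / 3 ≤ (1 + x) * Real.log (1 + x) := by
  set f : ℝ → ℝ := fun y => (1 + y) * Real.log (1 + y) - y - y ^ 2 / 3 with hf
  have hderiv : ∀ y ∈ interior (Icc (0:ℝ) 1), HasDerivAt f (Real.log (1 + y) - 2 * y / 3) y := by
    intro y hy
    rw [interior_Icc] at hy
    have hy0 : (0:ℝ) < 1 + y := by have := hy.1; linarith
    have h1 : HasDerivAt (fun y : ℝ => 1 + y) 1 y := by
      simpa using (hasDerivAt_id y).const_add 1
    have h2 : HasDerivAt (fun y : ℝ => Real.log (1 + y)) (1 / (1 + y)) y := by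
      exact ((Real.hasDerivAt_log hy0.ne').comp y h1).congr_deriv (by ring)
    have h3 : HasDerivAt (fun y : ℝ => (1 + y) * Real.log (1 + y))
        (1 * Real.log (1 + y) + (1 + y) * (1 / (1 + y))) y := h1.mul h2
    have h4 : HasDerivAt (fun y : ℝ => y ^ 2 / 3) (2 * y ^ 1 / 3) y :=
      (hasDerivAt_pow 2 y).div_const 3
    have h5 := (h3.sub (hasDerivAt_id y)).sub h4
    refine h5.congr_deriv ?_
    rw [mul_one_div_cancel hy0.ne']; ring
  have hmono : MonotoneOn f (Icc (0:ℝ) 1) := by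
    apply monotoneOn_of_deriv_nonneg (convex_Icc 0 1)
    · apply ContinuousOn.sub
      apply ContinuousOn.sub
      · apply ContinuousOn.mul (by fun_prop)
        apply ContinuousOn.log (by fun_prop)
        intro y hy; have := hy.1; dsimp; linarith
      · fun_prop
      · fun_prop
    · intro y hy
      exact (hderiv y hy).differentiableAt.differentiableWithinAt
    · intro y hy
      rw [(hderiv y hy).deriv]
      rw [interior_Icc] at hy
      have hl := log_one_add_ge y hy.1.le hy.2.le
      have h2 : (0.6931471803 : ℝ) < Real.log 2 := Real.log_two_gt_d9
      nlinarith [hy.1.le]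
  have h0 : f 0 = 0 := by simp [hf]
  have := hmono (left_mem_Icc.2 zero_le_one) (mem_Icc.2 ⟨hx0, hx1⟩) hx0
  rw [h0] at this
  simp only [hf] at this
  linarith

lemma exp_neg_le_quad (x : ℝ) (hx : 0 ≤ x) :
    Real.exp (-x) ≤ 1 - x + x ^ 2 / 2 := by
  have h := Real.quadratic_le_exp_of_nonneg hx
  have hb : (0:ℝ) < 1 + x + x ^ 2 / 2 := by nlinarith
  have hq : (0:ℝ) < 1 - x + x ^ 2 / 2 := by nlinarith [sq_nonneg (x - 1)]
  have h1 : (1:ℝ) ≤ (1 - x + x ^ 2 / 2) * Real.exp x := by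
    nlinarith [sq_nonneg (x ^ 2)]
  have h2 : Real.exp (-x) * Real.exp x = 1 := by
    rw [← Real.exp_add]; simp
  nlinarith [Real.exp_pos x]

lemma mgf_two_point (p t : ℝ) (hp0 : 0 ≤ p) :
    (1 - p) * Real.exp (t * (-p)) + p * Real.exp (t * (1 - p)) ≤
      Real.exp (p * (Real.exp t - 1 - t)) := by
  have h1 : (1 - p) * Real.exp (t * (-p)) + p * Real.exp (t * (1 - p)) =
      Real.exp (-(t * p)) * (1 + p * (Real.exp t - 1)) := by
    have : t * (1 - p) = t + -(t * p) := by ring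
    rw [this, Real.exp_add]
    have : t * (-p) = -(t * p) := by ring
    rw [this]
    ring
  rw [h1]
  have h2 : 1 + p * (Real.exp t - 1) ≤ Real.exp (p * (Real.exp t - 1)) := by
    have := Real.add_one_le_exp (p * (Real.exp t - 1)); linarith
  calc Real.exp (-(t * p)) * (1 + p * (Real.exp t - 1))
      ≤ Real.exp (-(t * p)) * Real.exp (p * (Real.exp t - 1)) := by
        apply mul_le_mul_of_nonneg_left h2 (Real.exp_nonneg _)
    _ = Real.exp (p * (Real.exp t - 1 - t)) := by rw [← Real.exp_add]; ring_nf
lemma integrableOn_two_valued {F : ℤ → ℝ} {c : ℝ} (s : Set ℝ) (hs : volume s < ⊤) :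
    IntegrableOn (fun u : ℝ => F (⌊u + c⌋ - ⌊u⌋)) s := by
  have hFm : Measurable F := measurable_from_top
  have hhm : Measurable (fun u : ℝ => F (⌊u + c⌋ - ⌊u⌋)) :=
    hFm.comp ((measurable_id.add_const c).floor.sub measurable_id.floor)
  refine Integrable.mono' (g := fun _ => max |F ⌊c⌋| |F (⌊c⌋ + 1)|)
    (integrableOn_const hs.ne) hhm.aestronglyMeasurable.restrict
    (ae_of_all _ fun u => ?_)
  rcases floor_diff_two_valued u c with h | h <;> rw [h] <;>
    simp [le_max_left, le_max_right]

lemma key_integral (a c : ℝ) (F : ℤ → ℝ) :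
    ∫ x in Ico (0:ℝ) 1, F (⌊x + a + c⌋ - ⌊x + a⌋) =
      (1 - Int.fract c) * F ⌊c⌋ + Int.fract c * F (⌊c⌋ + 1) := by
  set β := Int.fract c with hβ
  have hβ0 : 0 ≤ β := Int.fract_nonneg c
  have hβ1 : β < 1 := Int.fract_lt_one c
  have hKβ : (⌊c⌋ : ℝ) + β = c := Int.floor_add_fract c
  set h : ℝ → ℝ := fun u => F (⌊u + c⌋ - ⌊u⌋) with hh
  -- step 1: reduce to ∫ x in 0..1, h x
  have step1 : ∫ x in Ico (0:ℝ) 1, F (⌊x + a + c⌋ - ⌊x + a⌋) = ∫ x in (0:ℝ)..1, h x := by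
    have hper : Function.Periodic (fun x => h (x + a)) 1 := by
      intro x
      simp only [hh]
      have e1 : x + 1 + a + c = (x + a + c) + 1 := by ring
      have e2 : x + 1 + a = (x + a) + 1 := by ring
      rw [e1, e2, Int.floor_add_one, Int.floor_add_one]
      congr 1
      ring
    have e3 : ∫ x in Ico (0:ℝ) 1, F (⌊x + a + c⌋ - ⌊x + a⌋) = ∫ x in (0:ℝ)..1, h (x + a) := by
      rw [integral_Ico_eq_integral_Ioo, ← integral_Ioc_eq_integral_Ioo,
        ← intervalIntegral.integral_of_le zero_le_one]
    rw [e3]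
    have e4 := hper.intervalIntegral_add_eq 0 (-a)
    rw [zero_add] at e4
    rw [e4, intervalIntegral.integral_comp_add_right h a]
    norm_num
  rw [step1]
  -- step 2: split the interval
  have hle1 : (0:ℝ) ≤ 1 - β := by linarith
  have hle2 : 1 - β ≤ (1:ℝ) := by linarith
  have hsplit : Ioo (0:ℝ) 1 = Ioo 0 (1 - β) ∪ Ico (1 - β) 1 := by
    ext x
    simp only [mem_Ioo, mem_Ico, mem_union]
    constructor
    · rintro ⟨h1, h2⟩
      rcases lt_or_ge x (1 - β) with h3 | h3
      · exact Or.inl ⟨h1, h3⟩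
      · exact Or.inr ⟨h3, h2⟩
    · rintro (⟨h1, h2⟩ | ⟨h1, h2⟩)
      · exact ⟨h1, by linarith⟩
      · exact ⟨by linarith, h2⟩
  have hdisj : Disjoint (Ioo (0:ℝ) (1 - β)) (Ico (1 - β) 1) :=
    Set.disjoint_left.2 fun x hx1 hx2 => absurd hx2.1 (not_le.2 hx1.2)
  have hint1 : IntegrableOn h (Ioo (0:ℝ) (1 - β)) :=
    integrableOn_two_valued _ (by rw [Real.volume_Ioo]; exact ENNReal.ofReal_lt_top)
  have hint2 : IntegrableOn h (Ico (1 - β) 1) :=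
    integrableOn_two_valued _ (by rw [Real.volume_Ico]; exact ENNReal.ofReal_lt_top)
  rw [intervalIntegral.integral_of_le zero_le_one, integral_Ioc_eq_integral_Ioo, hsplit,
    setIntegral_union hdisj measurableSet_Ico hint1 hint2]
  -- step 3: evaluate the two pieces
  have hval1 : ∫ x in Ioo (0:ℝ) (1 - β), h x = (1 - β) * F ⌊c⌋ := by
    rw [setIntegral_congr_fun measurableSet_Ioo (g := fun _ => F ⌊c⌋) ?_]
    · rw [setIntegral_const, measureReal_def, Real.volume_Ioo, smul_eq_mul, ENNReal.toReal_ofReal (by linarith)]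
      norm_num
    · intro x hx
      simp only [mem_Ioo] at hx
      simp only [hh]
      congr 1
      have hfx : ⌊x⌋ = 0 := Int.floor_eq_zero_iff.2 ⟨hx.1.le, by linarith⟩
      have hfc : ⌊x + c⌋ = ⌊c⌋ := by
        rw [Int.floor_eq_iff]
        constructor
        · linarith
        · push_cast; linarith
      rw [hfx, hfc]
      ring
  have hval2 : ∫ x in Ico (1 - β) 1, h x = β * F (⌊c⌋ + 1) := by
    rw [setIntegral_congr_fun measurableSet_Ico (g := fun _ => F (⌊c⌋ + 1)) ?_]
    · rw [setIntegral_const, measureReal_def, Real.volume_Ico, smul_eq_mul, ENNReal.toReal_ofReal (by linarith)]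
      norm_num
    · intro x hx
      simp only [mem_Ico] at hx
      simp only [hh]
      congr 1
      have hx0 : (0:ℝ) < x := by linarith [hx.1]
      have hfx : ⌊x⌋ = 0 := Int.floor_eq_zero_iff.2 ⟨hx0.le, hx.2⟩
      have hfc : ⌊x + c⌋ = ⌊c⌋ + 1 := by
        rw [Int.floor_eq_iff]
        constructor
        · push_cast; linarith [hx.1]
        · push_cast; linarith [hx.2]
      rw [hfx, hfc]
      ring
  rw [hval1, hval2]
lemma omega_integral {Ω : Type*} [MeasurableSpace Ω] (μ : Measure Ω) (R : Ω → ℝ)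
    (hR : Measurable R) (hU : μ.map R = volume.restrict (Set.Ico (0:ℝ) 1))
    (a c : ℝ) (F : ℤ → ℝ) :
    ∫ ω, F (⌊R ω + a + c⌋ - ⌊R ω + a⌋) ∂μ =
      (1 - Int.fract c) * F ⌊c⌋ + Int.fract c * F (⌊c⌋ + 1) := by
  have hFm : Measurable F := measurable_from_top
  have hgm : Measurable fun x : ℝ => F (⌊x + a + c⌋ - ⌊x + a⌋) :=
    hFm.comp ((((measurable_id.add_const a).add_const c).floor).sub
      (measurable_id.add_const a).floor)
  rw [← key_integral a c F, ← hU,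
    integral_map hR.aemeasurable hgm.aestronglyMeasurable]

lemma integrable_two_valued {Ω : Type*} [MeasurableSpace Ω] (μ : Measure Ω)
    [IsProbabilityMeasure μ] (R : Ω → ℝ) (hR : Measurable R) (a c : ℝ) (F : ℤ → ℝ) :
    Integrable (fun ω => F (⌊R ω + a + c⌋ - ⌊R ω + a⌋)) μ := by
  have hFm : Measurable F := measurable_from_top
  have hm : Measurable fun ω => F (⌊R ω + a + c⌋ - ⌊R ω + a⌋) :=
    hFm.comp ((((hR.add_const (a)).add_const c).floor).sub (hR.add_const a).floor)
  refine Integrable.mono' (integrable_const (max |F ⌊c⌋| |F (⌊c⌋ + 1)|))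
    hm.aestronglyMeasurable (ae_of_all _ fun ω => ?_)
  rcases floor_diff_two_valued (R ω + a) c with h | h <;> rw [h] <;>
    simp [le_max_left, le_max_right]

lemma mgf_coord {Ω : Type*} [MeasurableSpace Ω] (μ : Measure Ω) [IsProbabilityMeasure μ]
    (R : Ω → ℝ) (hR : Measurable R) (hU : μ.map R = volume.restrict (Set.Ico (0:ℝ) 1))
    (a c t : ℝ) :
    mgf (fun ω => ((⌊R ω + a + c⌋ - ⌊R ω + a⌋ : ℤ) : ℝ) - c) μ t ≤
      Real.exp (Int.fract c * (Real.exp t - 1 - t)) := by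
  have h := omega_integral μ R hR hU a c (fun k => Real.exp (t * ((k : ℝ) - c)))
  have e1 : mgf (fun ω => ((⌊R ω + a + c⌋ - ⌊R ω + a⌋ : ℤ) : ℝ) - c) μ t
      = (1 - Int.fract c) * Real.exp (t * ((⌊c⌋ : ℝ) - c)) +
        Int.fract c * Real.exp (t * (((⌊c⌋ + 1 : ℤ) : ℝ) - c)) := h
  rw [e1]
  have hcf := Int.floor_add_fract c
  have e2 : (⌊c⌋ : ℝ) - c = -(Int.fract c) := by linarith
  have e3 : ((⌊c⌋ + 1 : ℤ) : ℝ) - c = 1 - Int.fract c := by push_cast; linarith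
  rw [e2, e3]
  exact mgf_two_point (Int.fract c) t (Int.fract_nonneg c)

lemma exp_coord {Ω : Type*} [MeasurableSpace Ω] (μ : Measure Ω) [IsProbabilityMeasure μ]
    (R : Ω → ℝ) (hR : Measurable R) (hU : μ.map R = volume.restrict (Set.Ico (0:ℝ) 1))
    (a c : ℝ) :
    ∫ ω, ((⌊R ω + a + c⌋ - ⌊R ω + a⌋ : ℤ) : ℝ) ∂μ = c := by
  refine (omega_integral μ R hR hU a c (fun k => (k : ℝ))).trans ?_
  push_cast
  linear_combination Int.floor_add_fract c
/-- The total number of threshold crossings `T = ∑ j (⌊r j + a j + c j⌋ − ⌊r j + a j⌋)`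
has expectation `∑ j c j`, and for `δ ∈ (0,1)` it deviates from its mean by `δ·s`
(where `s = ∑ j min (c j) 1`) with probability at most `2·exp(−δ²s/3)`. -/
theorem stmt_11 {Ω : Type*} [MeasurableSpace Ω] (μ : Measure Ω) [IsProbabilityMeasure μ]
    (n : ℕ) (r : Fin n → Ω → ℝ) (hmeas : ∀ j, Measurable (r j))
    (hindep : iIndepFun r μ)
    (hunif : ∀ j, μ.map (r j) = volume.restrict (Set.Ico (0 : ℝ) 1))
    (a c : Fin n → ℝ) (ha : ∀ j, 0 ≤ a j) (hc : ∀ j, 0 ≤ c j)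
    (s : ℝ) (hs : s = ∑ j, min (c j) 1)
    (T : Ω → ℤ) (hT : ∀ ω, T ω = ∑ j, (⌊r j ω + a j + c j⌋ - ⌊r j ω + a j⌋)) :
    (∫ ω, (T ω : ℝ) ∂μ = ∑ j, c j) ∧
      ∀ δ : ℝ, 0 < δ → δ < 1 →
        μ {ω | δ * s ≤ |(T ω : ℝ) - ∑ j, c j|} ≤
          ENNReal.ofReal (2 * Real.exp (-δ ^ 2 * s / 3)) := by
  have hTrw : ∀ ω, (T ω : ℝ) = ∑ j, ((⌊r j ω + a j + c j⌋ - ⌊r j ω + a j⌋ : ℤ) : ℝ) := by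
    intro ω; rw [hT ω]; push_cast; rfl
  have hXint : ∀ j, Integrable
      (fun ω => ((⌊r j ω + a j + c j⌋ - ⌊r j ω + a j⌋ : ℤ) : ℝ)) μ :=
    fun j => integrable_two_valued μ (r j) (hmeas j) (a j) (c j) (fun k => (k : ℝ))
  have hpart1 : ∫ ω, (T ω : ℝ) ∂μ = ∑ j, c j := by
    calc ∫ ω, (T ω : ℝ) ∂μ
        = ∫ ω, ∑ j, ((⌊r j ω + a j + c j⌋ - ⌊r j ω + a j⌋ : ℤ) : ℝ) ∂μ :=
          integral_congr_ae (Filter.Eventually.of_forall hTrw)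
      _ = ∑ j, ∫ ω, ((⌊r j ω + a j + c j⌋ - ⌊r j ω + a j⌋ : ℤ) : ℝ) ∂μ :=
          integral_finset_sum Finset.univ (fun j _ => hXint j)
      _ = ∑ j, c j := Finset.sum_congr rfl fun j _ =>
          exp_coord μ (r j) (hmeas j) (hunif j) (a j) (c j)
  refine ⟨hpart1, ?_⟩
  intro δ hδ0 hδ1
  set Y : Fin n → Ω → ℝ :=
    fun j ω => ((⌊r j ω + a j + c j⌋ - ⌊r j ω + a j⌋ : ℤ) : ℝ) - c j with hY
  set Z : Ω → ℝ := ∑ j, Y j with hZdef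
  have hZfun : ∀ ω, Z ω = ∑ j, Y j ω := by
    intro ω; rw [hZdef]; simp [Finset.sum_apply]
  have hZω : ∀ ω, Z ω = (T ω : ℝ) - ∑ j, c j := by
    intro ω
    rw [hZfun ω, hTrw ω, ← Finset.sum_sub_distrib]
  have hYmeas : ∀ j, Measurable (Y j) := by
    intro j
    rw [hY]
    exact (measurable_from_top (f := fun k : ℤ => ((k : ℝ) - c j))).comp
      ((((hmeas j).add_const (a j)).add_const (c j)).floor.sub ((hmeas j).add_const (a j)).floor)
  have hYindep : iIndepFun Y μ := by
    rw [hY]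
    exact hindep.comp
      (fun j (x : ℝ) => ((⌊x + a j + c j⌋ - ⌊x + a j⌋ : ℤ) : ℝ) - c j)
      (fun j => (measurable_from_top (f := fun k : ℤ => ((k : ℝ) - c j))).comp
        (((measurable_id.add_const (a j)).add_const (c j)).floor.sub
          (measurable_id.add_const (a j)).floor))
  have hYval : ∀ j ω, Y j ω = -(Int.fract (c j)) ∨ Y j ω = 1 - Int.fract (c j) := by
    intro j ω
    have hcf := Int.floor_add_fract (c j)
    rcases floor_diff_two_valued (r j ω + a j) (c j) with h | h
    · left; simp only [hY]; rw [h]; push_cast; linarith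
    · right; simp only [hY]; rw [h]; push_cast; linarith
  have hYbdd : ∀ j ω, |Y j ω| ≤ 1 := by
    intro j ω
    have h0 := Int.fract_nonneg (c j); have h1 := Int.fract_lt_one (c j)
    rcases hYval j ω with h | h <;> rw [h, abs_le] <;> constructor <;> linarith
  have hZmeas : Measurable Z := by
    have : Z = fun ω => ∑ j, Y j ω := funext hZfun
    rw [this]
    exact Finset.measurable_sum _ fun j _ => hYmeas j
  have hintexp : ∀ t : ℝ, Integrable (fun ω => Real.exp (t * Z ω)) μ := by
    intro t
    refine Integrable.mono' (integrable_const (Real.exp (|t| * n)))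
      ((hZmeas.const_mul t).exp).aestronglyMeasurable (ae_of_all _ fun ω => ?_)
    rw [Real.norm_eq_abs, Real.abs_exp]
    apply Real.exp_le_exp.2
    calc t * Z ω ≤ |t * Z ω| := le_abs_self _
      _ = |t| * |Z ω| := abs_mul _ _
      _ ≤ |t| * n := by
        apply mul_le_mul_of_nonneg_left ?_ (abs_nonneg t)
        have h2 : |Z ω| ≤ ∑ j : Fin n, (1 : ℝ) := by
          rw [hZfun ω]
          exact (Finset.abs_sum_le_sum_abs _ _).trans
            (Finset.sum_le_sum fun j _ => hYbdd j ω)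
        simpa using h2
  set m : ℝ := ∑ j, Int.fract (c j) with hm
  have hms : m ≤ s := by
    rw [hs, hm]
    apply Finset.sum_le_sum
    intro j _
    have h1 := Int.fract_lt_one (c j)
    have h3 : (0 : ℤ) ≤ ⌊c j⌋ := Int.floor_nonneg.2 (hc j)
    have h4 := Int.floor_add_fract (c j)
    have h5 : (0 : ℝ) ≤ (⌊c j⌋ : ℝ) := by exact_mod_cast h3
    exact le_min (by linarith) h1.le
  have hm0 : (0 : ℝ) ≤ m := Finset.sum_nonneg fun j _ => Int.fract_nonneg _
  have hs0 : (0 : ℝ) ≤ s := hm0.trans hms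
  have hq : ∀ t : ℝ, 0 ≤ Real.exp t - 1 - t := fun t => by
    have := Real.add_one_le_exp t; linarith
  have hmgfY : ∀ j (t : ℝ), mgf (Y j) μ t ≤
      Real.exp (Int.fract (c j) * (Real.exp t - 1 - t)) := by
    intro j t
    rw [hY]
    exact mgf_coord μ (r j) (hmeas j) (hunif j) (a j) (c j) t
  have hmgfZ : ∀ t : ℝ, mgf Z μ t ≤ Real.exp (s * (Real.exp t - 1 - t)) := by
    intro t
    have h1 : mgf Z μ t = ∏ j, mgf (Y j) μ t := by
      rw [hZdef]
      exact hYindep.mgf_sum hYmeas Finset.univ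
    rw [h1]
    calc ∏ j, mgf (Y j) μ t
        ≤ ∏ j, Real.exp (Int.fract (c j) * (Real.exp t - 1 - t)) :=
          Finset.prod_le_prod (fun j _ => mgf_nonneg) (fun j _ => hmgfY j t)
      _ = Real.exp (∑ j, Int.fract (c j) * (Real.exp t - 1 - t)) := by
          rw [Real.exp_sum]
      _ ≤ Real.exp (s * (Real.exp t - 1 - t)) := by
          apply Real.exp_le_exp.2
          rw [← Finset.sum_mul]
          exact mul_le_mul_of_nonneg_right hms (hq t)
  have h1δ : (0 : ℝ) < 1 + δ := by linarith
  have hup : (μ {ω | δ * s ≤ Z ω}).toReal ≤ Real.exp (-δ ^ 2 * s / 3) := by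
    have ht₁0 : 0 ≤ Real.log (1 + δ) := Real.log_nonneg (by linarith)
    have hcb := measure_ge_le_exp_mul_mgf (μ := μ) (X := Z) (t := Real.log (1 + δ))
      (δ * s) ht₁0 (hintexp _)
    refine hcb.trans ?_
    have hexpt₁ : Real.exp (Real.log (1 + δ)) = 1 + δ := Real.exp_log h1δ
    calc Real.exp (-Real.log (1 + δ) * (δ * s)) * mgf Z μ (Real.log (1 + δ))
        ≤ Real.exp (-Real.log (1 + δ) * (δ * s)) *
            Real.exp (s * (Real.exp (Real.log (1 + δ)) - 1 - Real.log (1 + δ))) :=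
          mul_le_mul_of_nonneg_left (hmgfZ _) (Real.exp_nonneg _)
      _ = Real.exp (s * (δ - (1 + δ) * Real.log (1 + δ))) := by
          rw [← Real.exp_add]; congr 1; rw [hexpt₁]; ring
      _ ≤ Real.exp (-δ ^ 2 * s / 3) := by
          apply Real.exp_le_exp.2
          have hkey := mul_log_ge_aux δ hδ0.le hδ1.le
          have h2 : δ - (1 + δ) * Real.log (1 + δ) ≤ -δ ^ 2 / 3 := by linarith
          calc s * (δ - (1 + δ) * Real.log (1 + δ)) ≤ s * (-δ ^ 2 / 3) :=
                mul_le_mul_of_nonneg_left h2 hs0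
            _ = -δ ^ 2 * s / 3 := by ring
  have hdn : (μ {ω | Z ω ≤ -(δ * s)}).toReal ≤ Real.exp (-δ ^ 2 * s / 3) := by
    have hcb := measure_le_le_exp_mul_mgf (μ := μ) (X := Z) (t := -δ)
      (-(δ * s)) (neg_nonpos.2 hδ0.le) (hintexp _)
    refine hcb.trans ?_
    calc Real.exp (-(-δ) * -(δ * s)) * mgf Z μ (-δ)
        ≤ Real.exp (-(-δ) * -(δ * s)) * Real.exp (s * (Real.exp (-δ) - 1 - (-δ))) :=
          mul_le_mul_of_nonneg_left (hmgfZ _) (Real.exp_nonneg _)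
      _ = Real.exp (s * (Real.exp (-δ) - 1 + δ) - δ ^ 2 * s) := by
          rw [← Real.exp_add]; congr 1; ring
      _ ≤ Real.exp (-δ ^ 2 * s / 3) := by
          apply Real.exp_le_exp.2
          have hq6 := exp_neg_le_quad δ hδ0.le
          have h2 : Real.exp (-δ) - 1 + δ - δ ^ 2 ≤ -δ ^ 2 / 3 := by nlinarith [sq_nonneg δ]
          calc s * (Real.exp (-δ) - 1 + δ) - δ ^ 2 * s
              = s * (Real.exp (-δ) - 1 + δ - δ ^ 2) := by ring
            _ ≤ s * (-δ ^ 2 / 3) := mul_le_mul_of_nonneg_left h2 hs0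
            _ = -δ ^ 2 * s / 3 := by ring
  have hset : {ω | δ * s ≤ |(T ω : ℝ) - ∑ j, c j|} ⊆
      {ω | δ * s ≤ Z ω} ∪ {ω | Z ω ≤ -(δ * s)} := by
    intro ω hω
    simp only [Set.mem_setOf_eq] at hω
    rw [← hZω ω] at hω
    rcases le_abs.1 hω with h | h
    · exact Or.inl h
    · exact Or.inr (by simp only [Set.mem_setOf_eq]; linarith)
  calc μ {ω | δ * s ≤ |(T ω : ℝ) - ∑ j, c j|}
      ≤ μ ({ω | δ * s ≤ Z ω} ∪ {ω | Z ω ≤ -(δ * s)}) := measure_mono hset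
    _ ≤ μ {ω | δ * s ≤ Z ω} + μ {ω | Z ω ≤ -(δ * s)} := measure_union_le _ _
    _ ≤ ENNReal.ofReal (Real.exp (-δ ^ 2 * s / 3)) +
        ENNReal.ofReal (Real.exp (-δ ^ 2 * s / 3)) := by
        apply add_le_add
        · rw [ENNReal.le_ofReal_iff_toReal_le (measure_ne_top μ _) (Real.exp_nonneg _)]
          exact hup
        · rw [ENNReal.le_ofReal_iff_toReal_le (measure_ne_top μ _) (Real.exp_nonneg _)]
          exact hdn
    _ = ENNReal.ofReal (2 * Real.exp (-δ ^ 2 * s / 3)) := by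
        rw [← ENNReal.ofReal_add (Real.exp_nonneg _) (Real.exp_nonneg _)]
        congr 1
        ring
end

section
/- Let C ≥ 1 and N ≥ 4 be real numbers, and let (δ_ℓ)_{ℓ ≥ 1} be a sequence of nonnegative reals with δ_1 ≤ N and δ_{ℓ+1} ≤ C·√(δ_ℓ) + C for all ℓ ≥ 1. Then δ_ℓ ≤ 4C² for every integer ℓ with ℓ ≥ log₂ log₂ N + 2. -/
/-- The recursion underlying the unpredictability analysis: a nonnegative sequence with
`δ 1 ≤ N` and `δ (ℓ+1) ≤ C√(δ ℓ) + C` collapses to `4C²` within `log₂ log₂ N + 2` levels. -/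
theorem stmt_12 (C N : ℝ) (hC : 1 ≤ C) (hN : 4 ≤ N)
    (δ : ℕ → ℝ) (hnonneg : ∀ ℓ, 0 ≤ δ ℓ) (h1 : δ 1 ≤ N)
    (hrec : ∀ ℓ : ℕ, 1 ≤ ℓ → δ (ℓ + 1) ≤ C * Real.sqrt (δ ℓ) + C) :
    ∀ ℓ : ℕ, Real.logb 2 (Real.logb 2 N) + 2 ≤ (ℓ : ℝ) → δ ℓ ≤ 4 * C ^ 2 := by
  have hN0 : (0:ℝ) < N := by linarith
  have hC0 : (0:ℝ) < C := by linarith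
  -- main invariant
  have key : ∀ k : ℕ, δ (1 + k) ≤ 4 * C ^ 2 * N ^ ((2:ℝ) ^ (-(k:ℝ))) := by
    intro k
    induction k with
    | zero =>
      simp only [Nat.cast_zero, neg_zero, Real.rpow_zero, Real.rpow_one]
      have : N ≤ 4 * C ^ 2 * N := by nlinarith [mul_nonneg hN0.le (show (0:ℝ) ≤ 4*C^2-1 by nlinarith)]
      linarith
    | succ k ih =>
      set e : ℝ := (2:ℝ) ^ (-(k:ℝ)) with he_def
      have he : (0:ℝ) ≤ e := le_of_lt (Real.rpow_pos_of_pos two_pos _)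
      have hE1 : (1:ℝ) ≤ N ^ e := Real.one_le_rpow (by linarith) he
      have hE1' : (1:ℝ) ≤ N ^ ((2:ℝ) ^ (-((k:ℝ)+1))) :=
        Real.one_le_rpow (by linarith) (le_of_lt (Real.rpow_pos_of_pos two_pos _))
      have h2 := hrec (1 + k) (by omega)
      have hsq : Real.sqrt (δ (1 + k)) ≤ 2 * C * N ^ ((2:ℝ) ^ (-((k:ℝ)+1))) := by
        have h3 : Real.sqrt (δ (1 + k)) ≤ Real.sqrt (4 * C ^ 2 * N ^ e) :=
          Real.sqrt_le_sqrt ih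
        have h4 : Real.sqrt (4 * C ^ 2 * N ^ e)
            = 2 * C * N ^ ((2:ℝ) ^ (-((k:ℝ)+1))) := by
          rw [Real.sqrt_mul (by positivity), show (4 * C ^ 2) = (2*C)^2 by ring,
            Real.sqrt_sq (by positivity), Real.sqrt_eq_rpow, ← Real.rpow_mul hN0.le]
          congr 1
          rw [show -((k:ℝ)+1) = -(k:ℝ) + (-1) by ring, Real.rpow_add two_pos]
          rw [Real.rpow_neg_one]
          rw [he_def]; ring
        linarith
      have hC2 : C ≤ 2 * C ^ 2 * N ^ ((2:ℝ) ^ (-((k:ℝ)+1))) := by nlinarith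
      have hstep : δ (1 + (k+1)) ≤ C * (2 * C * N ^ ((2:ℝ) ^ (-((k:ℝ)+1)))) + C := by
        have := mul_le_mul_of_nonneg_left hsq hC0.le
        have hEq : 1 + (k+1) = (1 + k) + 1 := by omega
        rw [hEq]
        linarith
      have : ((k:ℝ)+1) = ((k+1 : ℕ) : ℝ) := by push_cast; ring
      rw [← this]
      nlinarith
  -- N ≥ 4 gives logb bounds
  have hlogN : (2:ℝ) ≤ Real.logb 2 N := by
    have h4 : Real.logb 2 4 = 2 := by
      rw [show (4:ℝ) = (2:ℝ) ^ (2:ℝ) by norm_num [Real.rpow_natCast ((2:ℝ)) 2]]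
      exact Real.logb_rpow (by norm_num) (by norm_num)
    calc (2:ℝ) = Real.logb 2 4 := h4.symm
      _ ≤ Real.logb 2 N := Real.logb_le_logb_of_le (by norm_num) (by norm_num) hN
  have hloglog : (1:ℝ) ≤ Real.logb 2 (Real.logb 2 N) := by
    calc (1:ℝ) = Real.logb 2 2 := (Real.logb_self_eq_one (by norm_num)).symm
      _ ≤ _ := Real.logb_le_logb_of_le (by norm_num) (by norm_num) (by linarith)
  intro ℓ hℓ
  have hℓ3 : 3 ≤ ℓ := by
    have : (3:ℝ) ≤ (ℓ:ℝ) := by linarith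
    exact_mod_cast this
  obtain ⟨k, rfl⟩ : ∃ k, ℓ = 1 + k + 1 := ⟨ℓ - 2, by omega⟩
  have hk : Real.logb 2 (Real.logb 2 N) ≤ (k:ℝ) := by
    push_cast at hℓ; linarith
  -- N ^ (2 ^ (-k)) ≤ 2
  set e : ℝ := (2:ℝ) ^ (-(k:ℝ)) with he_def
  have he : (0:ℝ) ≤ e := le_of_lt (Real.rpow_pos_of_pos two_pos _)
  have h2k : Real.logb 2 N ≤ (2:ℝ) ^ (k:ℝ) := by
    calc Real.logb 2 N = 2 ^ (Real.logb 2 (Real.logb 2 N)) :=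
          (Real.rpow_logb two_pos (by norm_num) (by linarith)).symm
      _ ≤ 2 ^ (k:ℝ) := Real.rpow_le_rpow_of_exponent_le one_le_two hk
  have hNle : N ≤ (2:ℝ) ^ ((2:ℝ) ^ (k:ℝ)) := by
    calc N = 2 ^ (Real.logb 2 N) := (Real.rpow_logb two_pos (by norm_num) hN0).symm
      _ ≤ _ := Real.rpow_le_rpow_of_exponent_le one_le_two h2k
  have hE2 : N ^ e ≤ 2 := by
    calc N ^ e ≤ ((2:ℝ) ^ ((2:ℝ) ^ (k:ℝ))) ^ e := Real.rpow_le_rpow hN0.le hNle he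
      _ = (2:ℝ) ^ ((2:ℝ) ^ (k:ℝ) * e) := (Real.rpow_mul (by norm_num) _ _).symm
      _ = 2 := by
          rw [show (2:ℝ) ^ (k:ℝ) * e = 1 by
            rw [he_def, ← Real.rpow_add two_pos]; simp, Real.rpow_one]
  have hδk : δ (1 + k) ≤ 8 * C ^ 2 := by
    have := key k
    nlinarith
  have hrec' := hrec (1 + k) (by omega)
  have hsq : Real.sqrt (δ (1 + k)) ≤ 3 * C := by
    calc Real.sqrt (δ (1 + k)) ≤ Real.sqrt ((3*C)^2) := by
          apply Real.sqrt_le_sqrt; nlinarith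
      _ = 3 * C := Real.sqrt_sq (by positivity)
  have := mul_le_mul_of_nonneg_left hsq hC0.le
  nlinarith
end

section
/- Fix n ≥ 1 and 0 < ε < 1, initial fills g_0 with 0 ≤ g_0(j) < 1 for every cup j, and any filling sequence and any emptier choices as in the context. Then among any ⌊n/ε⌋ + 1 consecutive steps, at least one step is a rest step. -/
/-- Single-processor cup game on `n` cups with resource augmentation `ε`:
among any `⌊n/ε⌋ + 1` consecutive steps, at least one step is a rest step
(i.e. a step at which every cup has fill `< 1` after the filler's move). -/
theorem stmt_13 (n : ℕ) (hn : 1 ≤ n) (ε : ℝ) (hε0 : 0 < ε) (hε1 : ε < 1)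
    (f : ℕ → Fin n → ℝ) (g : ℕ → Fin n → ℝ)
    (hg0 : ∀ j, 0 ≤ g 0 j ∧ g 0 j < 1)
    (hf : ∀ t j, 0 ≤ f t j) (hfsum : ∀ t, ∑ j, f t j ≤ 1 - ε)
    (hstep : ∀ t : ℕ, 1 ≤ t →
      (∃ j : Fin n, 1 ≤ g (t - 1) j + f t j ∧
        g t = Function.update (fun i => g (t - 1) i + f t i) j (g (t - 1) j + f t j - 1)) ∨
      ((∀ j, g (t - 1) j + f t j < 1) ∧ g t = fun i => g (t - 1) i + f t i)) :
    ∀ s : ℕ, 1 ≤ s → ∃ t : ℕ, s ≤ t ∧ t ≤ s + ⌊(n : ℝ) / ε⌋₊ ∧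
      ∀ j, g (t - 1) j + f t j < 1 := by
  -- sum of an update dropping one unit
  have sumupd : ∀ (h : Fin n → ℝ) (j0 : Fin n),
      ∑ j, Function.update h j0 (h j0 - 1) j = (∑ j, h j) - 1 := by
    intro h j0
    rw [Finset.sum_update_of_mem (Finset.mem_univ j0),
      ← Finset.add_sum_erase Finset.univ h (Finset.mem_univ j0),
      Finset.sdiff_singleton_eq_erase]
    ring
  -- nonnegativity of fills
  have hnonneg : ∀ t j, 0 ≤ g t j := by
    intro t
    induction t with
    | zero => intro j; exact (hg0 j).1
    | succ t ih =>
      intro j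
      rcases hstep (t + 1) (Nat.le_add_left 1 t) with ⟨j0, hj0, hgeq⟩ | ⟨_, hgeq⟩
      · simp only [Nat.add_sub_cancel] at hj0 hgeq
        rw [hgeq]
        by_cases hjj : j = j0
        · subst hjj; simp only [Function.update_self]; linarith
        · rw [Function.update_of_ne hjj]
          exact add_nonneg (ih j) (hf _ j)
      · simp only [Nat.add_sub_cancel] at hgeq
        rw [hgeq]
        exact add_nonneg (ih j) (hf _ j)
  -- each non-rest step decreases total fill by at least ε
  have hdec : ∀ t : ℕ, 1 ≤ t → (∃ j, 1 ≤ g (t - 1) j + f t j) →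
      ∑ j, g t j ≤ (∑ j, g (t - 1) j) - ε := by
    intro t ht ⟨j1, hj1⟩
    rcases hstep t ht with ⟨j0, hj0, hgeq⟩ | ⟨hall, _⟩
    · rw [hgeq, sumupd, Finset.sum_add_distrib]
      have := hfsum t
      linarith
    · exact absurd hj1 (not_le.mpr (hall j1))
  -- total fill is always < n
  have hsum : ∀ t, ∑ j, g t j < n := by
    intro t
    induction t with
    | zero =>
      calc ∑ j, g 0 j < ∑ _j : Fin n, (1 : ℝ) := by
            apply Finset.sum_lt_sum_of_nonempty
            · exact Finset.univ_nonempty_iff.mpr (Fin.pos_iff_nonempty.mp hn)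
            · intro j _; exact (hg0 j).2
        _ = n := by simp
    | succ t ih =>
      rcases hstep (t + 1) (Nat.le_add_left 1 t) with ⟨j0, hj0, hgeq⟩ | ⟨hall, hgeq⟩
      · have := hdec (t + 1) (Nat.le_add_left 1 t) ⟨j0, hj0⟩
        simp only [Nat.add_sub_cancel] at this
        linarith
      · simp only [Nat.add_sub_cancel] at hall hgeq
        rw [hgeq]
        calc ∑ j, (g t j + f (t + 1) j) < ∑ _j : Fin n, (1 : ℝ) := by
              apply Finset.sum_lt_sum_of_nonempty
              · exact Finset.univ_nonempty_iff.mpr (Fin.pos_iff_nonempty.mp hn)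
              · intro j _; exact hall j
          _ = n := by simp
  intro s hs
  by_contra hcon
  push_neg at hcon
  -- every step in the window is non-rest
  have hnr : ∀ t : ℕ, s ≤ t → t ≤ s + ⌊(n : ℝ) / ε⌋₊ → ∃ j, 1 ≤ g (t - 1) j + f t j := by
    intro t h1 h2
    obtain ⟨j, hj⟩ := hcon t h1 h2
    exact ⟨j, hj⟩
  set k := ⌊(n : ℝ) / ε⌋₊ with hk
  -- cumulative decrease
  have hcum : ∀ i : ℕ, i ≤ k → ∑ j, g (s + i) j ≤ (∑ j, g (s - 1) j) - (i + 1) * ε := by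
    intro i
    induction i with
    | zero =>
      intro _
      have := hdec s hs (hnr s le_rfl (Nat.le_add_right s k))
      simpa using this
    | succ i ih =>
      intro hik
      have h1 : s ≤ s + (i + 1) := Nat.le_add_right _ _
      have h2 : s + (i + 1) ≤ s + k := Nat.add_le_add_left hik s
      have hd := hdec (s + (i + 1)) (le_trans hs h1) (hnr _ h1 h2)
      have he : s + (i + 1) - 1 = s + i := by omega
      rw [he] at hd
      have := ih (le_of_lt (Nat.lt_of_succ_le hik))
      push_cast
      push_cast at this
      linarith
  have hfin := hcum k le_rfl
  have hlt : (n : ℝ) < (k + 1) * ε := by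
    have h1 : (n : ℝ) / ε < k + 1 := Nat.lt_floor_add_one _
    calc (n : ℝ) = (n / ε) * ε := by field_simp
      _ < (k + 1) * ε := by apply mul_lt_mul_of_pos_right h1 hε0
  have h0 : (0 : ℝ) ≤ ∑ j, g (s + k) j :=
    Finset.sum_nonneg fun j _ => hnonneg _ j
  have := hsum (s - 1)
  linarith
end

section
/- Let n ≥ 2 and 1 ≤ m ≤ n be integers. Let A_1,…,A_{2n} be independent random variables, each uniformly distributed on {1,…,n}. For j ∈ {1,…,m}, let a_j = (1/2)·#{i : A_i = j}, and let d_1,…,d_m be fixed real numbers. Let F = (1/2)·#{j ∈ {1,…,m} : a_j − d_j is not an integer}. Then P(F < m/64) ≤ exp(−m²/(4096·n)). -/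
open MeasureTheory ProbabilityTheory
open Real Finset
open scoped Classical

lemma exp_add_exp_neg_le {t : ℝ} (ht : |t| ≤ 1) : exp t + exp (-t) ≤ 2 * exp (t ^ 2) := by
  have h1 := Real.exp_bound ht (n := 3) (by norm_num)
  have h2 := Real.exp_bound (x := -t) (by rwa [abs_neg]) (n := 3) (by norm_num)
  have e1 : ∑ m ∈ Finset.range 3, t ^ m / m.factorial = 1 + t + t ^ 2 / 2 := by
    rw [Finset.sum_range_succ, Finset.sum_range_succ, Finset.sum_range_succ,
      Finset.sum_range_zero]
    norm_num [Nat.factorial]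
  have e2 : ∑ m ∈ Finset.range 3, (-t) ^ m / m.factorial = 1 - t + t ^ 2 / 2 := by
    rw [Finset.sum_range_succ, Finset.sum_range_succ, Finset.sum_range_succ,
      Finset.sum_range_zero]
    norm_num [Nat.factorial]; ring
  rw [e1] at h1; rw [e2, abs_neg] at h2
  have hfac : ((Nat.succ 3 : ℕ) : ℝ) / ((Nat.factorial 3 : ℕ) * (3:ℕ)) = 2/9 := by
    norm_num [Nat.factorial]
  rw [hfac] at h1 h2
  have h3 : |t| ^ 3 ≤ t ^ 2 := by
    have : |t| ^ 3 ≤ |t| ^ 2 := pow_le_pow_of_le_one (abs_nonneg t) ht (by norm_num)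
    simpa [sq_abs] using this
  have l1 : exp t ≤ 1 + t + t ^ 2 / 2 + t ^ 2 / 2 := by
    have := (abs_le.mp h1).2; nlinarith
  have l2 : exp (-t) ≤ 1 - t + t ^ 2 / 2 + t ^ 2 / 2 := by
    have := (abs_le.mp h2).2; nlinarith
  have l3 : (1 : ℝ) + t ^ 2 ≤ exp (t ^ 2) := by
    have := Real.add_one_le_exp (t ^ 2); linarith
  linarith

lemma sum_exp_le {α : Type*} [Fintype α] (t : ℝ) (ht : |t| ≤ 1) (d : α → ℝ)
    (hd : ∀ a, |d a| ≤ 1) (h0 : ∑ a, d a = 0) :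
    ∑ a, exp (t * d a) ≤ (Fintype.card α : ℝ) * exp (t ^ 2) := by
  have key : ∀ a, exp (t * d a) ≤ ((1 - d a)/2) * exp (-t) + ((1 + d a)/2) * exp t := by
    intro a
    have h1 : (0:ℝ) ≤ (1 - d a)/2 := by have := abs_le.mp (hd a); linarith
    have h2 : (0:ℝ) ≤ (1 + d a)/2 := by have := abs_le.mp (hd a); linarith
    have h3 : (1 - d a)/2 + (1 + d a)/2 = 1 := by ring
    have h4 := convexOn_exp.2 (Set.mem_univ (-t)) (Set.mem_univ t) h1 h2 h3
    have h4' : exp ((1 - d a)/2 * (-t) + (1 + d a)/2 * t) ≤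
        (1 - d a)/2 * exp (-t) + (1 + d a)/2 * exp t := by
      simpa [smul_eq_mul] using h4
    have h6 : (1 - d a)/2 * (-t) + (1 + d a)/2 * t = t * d a := by ring
    rwa [h6] at h4'
  calc ∑ a, exp (t * d a) ≤ ∑ a, (((1 - d a)/2) * exp (-t) + ((1 + d a)/2) * exp t) :=
        Finset.sum_le_sum fun a _ => key a
    _ = (Fintype.card α : ℝ) * ((exp t + exp (-t))/2) := by
        rw [Finset.sum_add_distrib, ← Finset.sum_mul, ← Finset.sum_mul]
        have e1 : ∑ a : α, (1 - d a)/2 = (Fintype.card α : ℝ)/2 := by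
          rw [← Finset.sum_div, Finset.sum_sub_distrib, h0, Finset.sum_const,
            Finset.card_univ]
          simp
        have e2 : ∑ a : α, (1 + d a)/2 = (Fintype.card α : ℝ)/2 := by
          rw [← Finset.sum_div, Finset.sum_add_distrib, h0, Finset.sum_const,
            Finset.card_univ]
          simp
        rw [e1, e2]; ring
    _ ≤ (Fintype.card α : ℝ) * exp (t ^ 2) := by
        have := exp_add_exp_neg_le ht
        have hc : (0:ℝ) ≤ (Fintype.card α : ℝ) := Nat.cast_nonneg _
        nlinarith

-- sum over tuple space splits via cons
lemma sum_tuple_succ {α : Type*} [Fintype α] {k : ℕ} (F : (Fin (k+1) → α) → ℝ) :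
    ∑ x : Fin (k+1) → α, F x = ∑ y : Fin k → α, ∑ a : α, F (Fin.cons a y) := by
  rw [← Equiv.sum_comp (Fin.consEquiv (fun _ => α)) F]
  rw [Fintype.sum_prod_type_right]
  rfl

lemma sum_prod_pow {α : Type*} [Fintype α] (k : ℕ) (c : α → ℝ) :
    ∑ x : Fin k → α, ∏ i, c (x i) = (∑ v, c v) ^ k := by
  induction k with
  | zero =>
    haveI : Unique (Fin 0 → α) := ⟨⟨fun i => i.elim0⟩, fun x => funext fun i => i.elim0⟩
    rw [Fintype.sum_unique]
    simp
  | succ k ih =>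
    rw [sum_tuple_succ (fun x => ∏ i, c (x i))]
    have : ∀ (y : Fin k → α) (a : α), ∏ i, c ((Fin.cons a y : Fin (k+1) → α) i)
        = c a * ∏ i, c (y i) := by
      intro y a
      rw [Fin.prod_univ_succ]
      simp
    simp_rw [this]
    rw [Finset.sum_comm]
    simp_rw [← Finset.mul_sum]
    rw [← Finset.sum_mul, ih, pow_succ]
    ring

lemma mcdiarmid_mgf {α : Type*} [Fintype α] [Nonempty α] (t : ℝ) (ht : |t| ≤ 1) :
    ∀ (k : ℕ) (f : (Fin k → α) → ℝ),
    (∀ (i : Fin k) (x y : Fin k → α), (∀ j, j ≠ i → x j = y j) → f x - f y ≤ 1) →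
    ∑ x : Fin k → α, exp (t * f x) ≤ (Fintype.card α : ℝ) ^ k *
      exp (t * ((∑ x : Fin k → α, f x) / (Fintype.card α : ℝ) ^ k) + t ^ 2 * k) := by
  intro k
  induction k with
  | zero =>
    intro f _
    haveI : Unique (Fin 0 → α) := ⟨⟨fun i => i.elim0⟩, fun x => funext fun i => i.elim0⟩
    rw [Fintype.sum_unique, Fintype.sum_unique]
    simp
  | succ k ih =>
    intro f hf
    set c : ℝ := (Fintype.card α : ℝ) with hc_def
    have hc : (0:ℝ) < c := by
      simp only [hc_def]
      exact_mod_cast Fintype.card_pos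
    set g : (Fin k → α) → ℝ := fun y => (∑ a : α, f (Fin.cons a y)) / c with hg_def
    -- difference at coordinate 0
    have hdiff0 : ∀ (a b : α) (y : Fin k → α), f (Fin.cons a y) - f (Fin.cons b y) ≤ 1 := by
      intro a b y
      refine hf 0 _ _ (fun j hj => ?_)
      induction j using Fin.cases with
      | zero => exact absurd rfl hj
      | succ j' => simp [Fin.cons_succ]
    have hd : ∀ (y : Fin k → α) (a : α), |f (Fin.cons a y) - g y| ≤ 1 := by
      intro y a
      rw [abs_le]
      have hrw : f (Fin.cons a y) - g y
          = (∑ b : α, (f (Fin.cons a y) - f (Fin.cons b y))) / c := by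
        rw [Finset.sum_sub_distrib, Finset.sum_const, Finset.card_univ]
        simp only [hg_def]
        rw [nsmul_eq_mul, ← hc_def, sub_div, mul_comm c, mul_div_assoc, div_self hc.ne', mul_one]
      constructor
      · rw [hrw, neg_le, ← neg_div, ← Finset.sum_neg_distrib, div_le_one hc]
        calc ∑ b : α, -(f (Fin.cons a y) - f (Fin.cons b y))
            ≤ ∑ _b : α, (1:ℝ) := Finset.sum_le_sum fun b _ => by
              have := hdiff0 b a y; linarith
          _ = c := by rw [Finset.sum_const, Finset.card_univ]; simp [hc_def]
      · rw [hrw, div_le_one hc]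
        calc ∑ b : α, (f (Fin.cons a y) - f (Fin.cons b y))
            ≤ ∑ _b : α, (1:ℝ) := Finset.sum_le_sum fun b _ => hdiff0 a b y
          _ = c := by rw [Finset.sum_const, Finset.card_univ]; simp [hc_def]
    have h0 : ∀ (y : Fin k → α), ∑ a : α, (f (Fin.cons a y) - g y) = 0 := by
      intro y
      rw [Finset.sum_sub_distrib, Finset.sum_const, Finset.card_univ]
      simp only [hg_def]
      rw [nsmul_eq_mul, ← hc_def, mul_div_assoc', mul_comm c, mul_div_assoc, div_self hc.ne',
        mul_one, sub_self]
    have hg : ∀ (i : Fin k) (y y' : Fin k → α), (∀ j, j ≠ i → y j = y' j) →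
        g y - g y' ≤ 1 := by
      intro i y y' hyy
      have : g y - g y' = (∑ a : α, (f (Fin.cons a y) - f (Fin.cons a y'))) / c := by
        rw [Finset.sum_sub_distrib]
        simp only [hg_def]
        ring
      rw [this, div_le_one hc]
      calc ∑ a : α, (f (Fin.cons a y) - f (Fin.cons a y'))
          ≤ ∑ _a : α, (1:ℝ) := by
            refine Finset.sum_le_sum fun a _ => ?_
            refine hf i.succ _ _ (fun j hj => ?_)
            induction j using Fin.cases with
            | zero => simp
            | succ j' =>
              simp only [Fin.cons_succ]
              exact hyy j' (fun h => hj (by rw [h]))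
        _ = c := by rw [Finset.sum_const, Finset.card_univ]; simp [hc_def]
    have hmean : ∑ y : Fin k → α, g y = (∑ x : Fin (k+1) → α, f x) / c := by
      rw [sum_tuple_succ f, ← Finset.sum_div]
    calc ∑ x : Fin (k+1) → α, exp (t * f x)
        = ∑ y : Fin k → α, ∑ a : α, exp (t * f (Fin.cons a y)) :=
          sum_tuple_succ _
      _ = ∑ y : Fin k → α, exp (t * g y) * ∑ a : α, exp (t * (f (Fin.cons a y) - g y)) := by
          refine Finset.sum_congr rfl fun y _ => ?_
          rw [Finset.mul_sum]
          refine Finset.sum_congr rfl fun a _ => ?_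
          rw [← Real.exp_add]
          congr 1
          ring
      _ ≤ ∑ y : Fin k → α, exp (t * g y) * (c * exp (t ^ 2)) := by
          refine Finset.sum_le_sum fun y _ => ?_
          refine mul_le_mul_of_nonneg_left ?_ (Real.exp_nonneg _)
          exact sum_exp_le t ht _ (hd y) (h0 y)
      _ = (c * exp (t ^ 2)) * ∑ y : Fin k → α, exp (t * g y) := by
          rw [← Finset.sum_mul]; ring
      _ ≤ (c * exp (t ^ 2)) * (c ^ k *
            exp (t * ((∑ y : Fin k → α, g y) / c ^ k) + t ^ 2 * k)) := by
          refine mul_le_mul_of_nonneg_left (ih g hg) ?_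
          positivity
      _ = (c * c ^ k) * (exp (t ^ 2) * exp (t * ((∑ x : Fin (k+1) → α, f x) / c ^ (k+1))
            + t ^ 2 * k)) := by
          rw [hmean, div_div, ← pow_succ']
          ring
      _ = c ^ (k+1) * exp (t * ((∑ x : Fin (k+1) → α, f x) / c ^ (k+1)) + t ^ 2 * ((k+1 : ℕ) : ℝ)) := by
          rw [← pow_succ', ← Real.exp_add]
          congr 1
          push_cast
          ring

noncomputable def cnt {n k : ℕ} (x : Fin k → Fin n) (j : Fin n) : ℕ :=
  (Finset.univ.filter (fun i => x i = j)).card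

lemma even_sub_odd (n k : ℕ) (j : Fin n) :
    ((Finset.univ.filter (fun x : Fin k → Fin n => Even (cnt x j))).card : ℝ)
      - ((Finset.univ.filter (fun x : Fin k → Fin n => ¬ Even (cnt x j))).card : ℝ)
      = ((n : ℝ) - 2) ^ k := by
  have key : ∑ x : Fin k → Fin n, ((-1 : ℝ)) ^ (cnt x j) = ((n:ℝ) - 2) ^ k := by
    have h1 : ∀ x : Fin k → Fin n, ((-1 : ℝ)) ^ (cnt x j)
        = ∏ i, (if x i = j then (-1 : ℝ) else 1) := by
      intro x
      rw [Finset.prod_ite, Finset.prod_const, Finset.prod_const, one_pow, mul_one]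
      rfl
    simp_rw [h1]
    have h2 : ∑ x : Fin k → Fin n, ∏ i, (if x i = j then (-1:ℝ) else 1)
        = (∑ v : Fin n, if v = j then (-1:ℝ) else 1) ^ k :=
      sum_prod_pow k (fun v => if v = j then (-1:ℝ) else 1)
    rw [h2]
    congr 1
    have : ∀ v : Fin n, (if v = j then (-1:ℝ) else 1) = 1 - (if v = j then (2:ℝ) else 0) := by
      intro v; split <;> norm_num
    simp_rw [this]
    rw [Finset.sum_sub_distrib, Finset.sum_const, Finset.card_univ, Finset.sum_ite_eq']
    simp [Fintype.card_fin]
  rw [← key, ← Finset.sum_filter_add_sum_filter_not Finset.univ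
    (fun x : Fin k → Fin n => Even (cnt x j))]
  have e1 : ∑ x ∈ Finset.univ.filter (fun x : Fin k → Fin n => Even (cnt x j)),
      ((-1:ℝ)) ^ (cnt x j) = ((Finset.univ.filter
        (fun x : Fin k → Fin n => Even (cnt x j))).card : ℝ) := by
    rw [Finset.sum_congr rfl (fun x hx => (Finset.mem_filter.mp hx).2.neg_one_pow)]
    simp
  have e2 : ∑ x ∈ Finset.univ.filter (fun x : Fin k → Fin n => ¬ Even (cnt x j)),
      ((-1:ℝ)) ^ (cnt x j) = -((Finset.univ.filter
        (fun x : Fin k → Fin n => ¬ Even (cnt x j))).card : ℝ) := by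
    have : ∀ x ∈ Finset.univ.filter (fun x : Fin k → Fin n => ¬ Even (cnt x j)),
        ((-1:ℝ)) ^ (cnt x j) = -1 := by
      intro x hx
      exact (Nat.not_even_iff_odd.mp (Finset.mem_filter.mp hx).2).neg_one_pow
    rw [Finset.sum_congr rfl this]
    simp [mul_comm]
  rw [e1, e2]
  ring

lemma countP_ge (n : ℕ) (hn : 2 ≤ n) (dj : ℝ) (j : Fin n) :
    ((31:ℝ)/64) * (n:ℝ) ^ (2*n) ≤ ((Finset.univ.filter (fun x : Fin (2*n) → Fin n =>
      ¬∃ z : ℤ, (1/2 : ℝ) * (cnt x j : ℝ) - dj = (z:ℝ))).card : ℝ) := by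
  set k := 2 * n with hk
  have hn0 : (0:ℝ) < n := by positivity
  set N : ℝ := (n:ℝ) ^ k with hN
  have hNpos : 0 < N := by positivity
  set E : ℝ := ((Finset.univ.filter (fun x : Fin k → Fin n => Even (cnt x j))).card : ℝ)
  set O : ℝ := ((Finset.univ.filter (fun x : Fin k → Fin n => ¬ Even (cnt x j))).card : ℝ)
  have hEO : E - O = ((n : ℝ) - 2) ^ k := even_sub_odd n k j
  have hsum : E + O = N := by
    have := Finset.card_filter_add_card_filter_not (s := (Finset.univ : Finset (Fin k → Fin n)))
      (p := fun x => Even (cnt x j))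
    have hcard : (Finset.univ : Finset (Fin k → Fin n)).card = n ^ k := by
      rw [Finset.card_univ, Fintype.card_fun]
      simp
    rw [hcard] at this
    have h' := congrArg (Nat.cast : ℕ → ℝ) this
    rw [Nat.cast_add, Nat.cast_pow] at h'
    exact h'
  -- (n-2)^k ≤ N/32
  have h2n : (0:ℝ) ≤ (n:ℝ) - 2 := by
    have : (2:ℝ) ≤ n := by exact_mod_cast hn
    linarith
  have hpow : ((n:ℝ) - 2) ^ k ≤ N / 32 := by
    have h1 : (n:ℝ) - 2 ≤ n * exp (-2/n) := by
      have := Real.add_one_le_exp (-2/(n:ℝ))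
      have h2 : (n:ℝ) * (-2/n + 1) ≤ n * exp (-2/n) :=
        mul_le_mul_of_nonneg_left this (le_of_lt hn0)
      have h3 : (n:ℝ) * (-2/n + 1) = n - 2 := by field_simp; ring
      linarith
    have h2 : ((n:ℝ) - 2) ^ k ≤ ((n:ℝ) * exp (-2/n)) ^ k :=
      pow_le_pow_left₀ h2n h1 k
    have h3 : ((n:ℝ) * exp (-2/n)) ^ k = N * exp (-2/n) ^ k := by
      rw [mul_pow, hN]
    have h4 : exp (-2/(n:ℝ)) ^ k = exp (-4) := by
      rw [← Real.exp_nat_mul]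
      congr 1
      rw [hk]
      field_simp
      push_cast
      ring
    have h5 : exp (-(4:ℝ)) ≤ 1/32 := by
      have he : (2.7182818283 : ℝ) < exp 1 := Real.exp_one_gt_d9
      have h6 : exp (4:ℝ) = exp 1 ^ (4:ℕ) := by
        rw [← Real.exp_nat_mul]; norm_num
      have h32 : (32:ℝ) ≤ exp 4 := by
        have hp : (2.7182818283:ℝ) ^ (4:ℕ) ≤ exp 1 ^ (4:ℕ) :=
          pow_le_pow_left₀ (by norm_num) he.le 4
        rw [h6]
        nlinarith
      rw [Real.exp_neg]
      rw [inv_le_comm₀ (Real.exp_pos 4) (by norm_num)] at *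
      · linarith [h32]
    calc ((n:ℝ) - 2) ^ k ≤ N * exp (-2/n) ^ k := by rw [← h3]; exact h2
      _ = N * exp (-4) := by rw [h4]
      _ ≤ N * (1/32) := mul_le_mul_of_nonneg_left h5 (le_of_lt hNpos)
      _ = N / 32 := by ring
  have hO : (31/64) * N ≤ O := by linarith
  have hE : O ≤ E := by
    have : (0:ℝ) ≤ ((n:ℝ) - 2) ^ k := pow_nonneg h2n k
    linarith
  -- case analysis
  by_cases hw : ∃ w : ℤ, 2 * dj = (w : ℝ)
  · obtain ⟨w, hw⟩ := hw
    have hiff : ∀ x : Fin k → Fin n,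
        (∃ z : ℤ, (1/2 : ℝ) * (cnt x j : ℝ) - dj = (z:ℝ)) ↔ (Even (cnt x j) ↔ Even w) := by
      intro x
      constructor
      · rintro ⟨z, hz⟩
        have : ((cnt x j : ℤ) : ℝ) = ((2 * z + w : ℤ) : ℝ) := by push_cast; linarith
        have hc : (cnt x j : ℤ) = 2 * z + w := by exact_mod_cast this
        constructor
        · intro he
          have : Even ((cnt x j : ℤ)) := by exact_mod_cast he
          rw [hc] at this
          rcases this with ⟨u, hu⟩
          exact ⟨u - z, by omega⟩
        · intro he
          have : Even ((2 * z + w : ℤ)) := by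
            rcases he with ⟨u, hu⟩; exact ⟨z + u, by omega⟩
          rw [← hc] at this
          exact_mod_cast this
      · intro hiff2
        by_cases hce : Even (cnt x j)
        · obtain ⟨u, hu⟩ := hce
          obtain ⟨v, hv⟩ := hiff2.mp ⟨u, hu⟩
          refine ⟨u - v, ?_⟩
          have h2d : dj = (v : ℝ) := by
            have : (w:ℝ) = (v:ℝ) + (v:ℝ) := by exact_mod_cast congrArg (Int.cast : ℤ → ℝ) hv
            linarith
          have hcu : (cnt x j : ℝ) = (u:ℝ) + (u:ℝ) := by exact_mod_cast congrArg (Nat.cast : ℕ → ℝ) hu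
          rw [h2d, hcu]
          push_cast
          ring
        · have hwodd : ¬ Even w := fun h => hce (hiff2.mpr h)
          obtain ⟨u, hu⟩ := Nat.not_even_iff_odd.mp hce
          obtain ⟨v, hv⟩ := Int.not_even_iff_odd.mp hwodd
          refine ⟨u - v, ?_⟩
          have h2d : dj = (v : ℝ) + 1/2 := by
            have : (w:ℝ) = 2*(v:ℝ) + 1 := by exact_mod_cast congrArg (Int.cast : ℤ → ℝ) hv
            linarith
          have hcu : (cnt x j : ℝ) = 2*(u:ℝ) + 1 := by
            exact_mod_cast congrArg (Nat.cast : ℕ → ℝ) hu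
          rw [h2d, hcu]
          push_cast
          ring
    by_cases hwe : Even w
    · have : (Finset.univ.filter (fun x : Fin k → Fin n =>
          ¬∃ z : ℤ, (1/2 : ℝ) * (cnt x j : ℝ) - dj = (z:ℝ)))
          = Finset.univ.filter (fun x : Fin k → Fin n => ¬ Even (cnt x j)) := by
        refine Finset.filter_congr fun x _ => ?_
        rw [hiff x]
        simp [hwe]
      rw [this]
      exact hO
    · have : (Finset.univ.filter (fun x : Fin k → Fin n =>
          ¬∃ z : ℤ, (1/2 : ℝ) * (cnt x j : ℝ) - dj = (z:ℝ)))
          = Finset.univ.filter (fun x : Fin k → Fin n => Even (cnt x j)) := by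
        refine Finset.filter_congr fun x _ => ?_
        rw [hiff x]
        simp [hwe]
      rw [this]
      linarith
  · have : (Finset.univ.filter (fun x : Fin k → Fin n =>
        ¬∃ z : ℤ, (1/2 : ℝ) * (cnt x j : ℝ) - dj = (z:ℝ))) = Finset.univ := by
      refine Finset.filter_true_of_mem fun x _ => ?_
      rintro ⟨z, hz⟩
      exact hw ⟨(cnt x j : ℤ) - 2 * z, by push_cast; linarith⟩
    rw [this]
    have : ((Finset.univ : Finset (Fin k → Fin n)).card : ℝ) = N := by
      rw [Finset.card_univ, Fintype.card_fun]
      simp [hN]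
    rw [this]
    linarith

noncomputable def ff (n m : ℕ) (d : Fin n → ℝ) (x : Fin (2*n) → Fin n) : ℝ :=
  (1/2 : ℝ) * ((Finset.univ.filter (fun j : Fin n => (j:ℕ) < m ∧
    ¬∃ z : ℤ, (1/2 : ℝ) * (cnt x j : ℝ) - d j = (z:ℝ))).card : ℝ)

lemma card_lt_m (n m : ℕ) (hmn : m ≤ n) :
    (Finset.univ.filter (fun j : Fin n => (j:ℕ) < m)).card = m := by
  refine Finset.card_eq_of_bijective (fun i hi => ⟨i, lt_of_lt_of_le hi hmn⟩) ?_ ?_ ?_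
  · intro j hj
    rw [Finset.mem_filter] at hj
    exact ⟨(j:ℕ), hj.2, by simp⟩
  · intro i hi
    simp [hi]
  · intro i k hi hk h
    simpa using congrArg Fin.val h

lemma mean_ge (n m : ℕ) (hn : 2 ≤ n) (hmn : m ≤ n) (d : Fin n → ℝ) :
    ((31:ℝ)/128) * m * (n:ℝ)^(2*n) ≤ ∑ x : Fin (2*n) → Fin n, ff n m d x := by
  have key : ∀ x : Fin (2*n) → Fin n, ff n m d x = (1/2 : ℝ) *
      ∑ j : Fin n, (if ((j:ℕ) < m ∧
        ¬∃ z : ℤ, (1/2 : ℝ) * (cnt x j : ℝ) - d j = (z:ℝ)) then (1:ℝ) else 0) := by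
    intro x
    rw [ff, Finset.card_filter]
    push_cast
    rfl
  simp_rw [key]
  rw [← Finset.mul_sum, Finset.sum_comm]
  have hterm : ∀ j ∈ Finset.univ.filter (fun j : Fin n => (j:ℕ) < m),
      ((31:ℝ)/64) * (n:ℝ)^(2*n) ≤ ∑ x : Fin (2*n) → Fin n, (if ((j:ℕ) < m ∧
        ¬∃ z : ℤ, (1/2 : ℝ) * (cnt x j : ℝ) - d j = (z:ℝ)) then (1:ℝ) else 0) := by
    intro j hj
    rw [Finset.mem_filter] at hj
    have hrw : ∀ x : Fin (2*n) → Fin n, (if ((j:ℕ) < m ∧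
        ¬∃ z : ℤ, (1/2 : ℝ) * (cnt x j : ℝ) - d j = (z:ℝ)) then (1:ℝ) else 0)
        = (if (¬∃ z : ℤ, (1/2 : ℝ) * (cnt x j : ℝ) - d j = (z:ℝ)) then (1:ℝ) else 0) := by
      intro x
      by_cases h : ¬∃ z : ℤ, (1/2 : ℝ) * (cnt x j : ℝ) - d j = (z:ℝ) <;> simp [h, hj.2]
    simp_rw [hrw]
    rw [Finset.sum_boole]
    simpa using countP_ge n hn (d j) j
  have hnonneg : ∀ j : Fin n, (0:ℝ) ≤ ∑ x : Fin (2*n) → Fin n, (if ((j:ℕ) < m ∧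
      ¬∃ z : ℤ, (1/2 : ℝ) * (cnt x j : ℝ) - d j = (z:ℝ)) then (1:ℝ) else 0) :=
    fun j => Finset.sum_nonneg fun x _ => by positivity
  have hsub : ∑ j ∈ Finset.univ.filter (fun j : Fin n => (j:ℕ) < m),
      (∑ x : Fin (2*n) → Fin n, (if ((j:ℕ) < m ∧
        ¬∃ z : ℤ, (1/2 : ℝ) * (cnt x j : ℝ) - d j = (z:ℝ)) then (1:ℝ) else 0))
      ≤ ∑ j : Fin n, (∑ x : Fin (2*n) → Fin n, (if ((j:ℕ) < m ∧
        ¬∃ z : ℤ, (1/2 : ℝ) * (cnt x j : ℝ) - d j = (z:ℝ)) then (1:ℝ) else 0)) :=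
    Finset.sum_le_sum_of_subset_of_nonneg (Finset.subset_univ _)
      (fun j _ _ => hnonneg j)
  have hlow : ((m:ℝ)) * (((31:ℝ)/64) * (n:ℝ)^(2*n))
      ≤ ∑ j ∈ Finset.univ.filter (fun j : Fin n => (j:ℕ) < m),
      (∑ x : Fin (2*n) → Fin n, (if ((j:ℕ) < m ∧
        ¬∃ z : ℤ, (1/2 : ℝ) * (cnt x j : ℝ) - d j = (z:ℝ)) then (1:ℝ) else 0)) := by
    calc ((m:ℝ)) * (((31:ℝ)/64) * (n:ℝ)^(2*n))
        = ∑ _j ∈ Finset.univ.filter (fun j : Fin n => (j:ℕ) < m),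
          (((31:ℝ)/64) * (n:ℝ)^(2*n)) := by
          rw [Finset.sum_const, card_lt_m n m hmn, nsmul_eq_mul]
      _ ≤ _ := Finset.sum_le_sum hterm
  have h12 : (0:ℝ) ≤ (1/2:ℝ) := by norm_num
  calc ((31:ℝ)/128) * m * (n:ℝ)^(2*n)
      = (1/2:ℝ) * (((m:ℝ)) * (((31:ℝ)/64) * (n:ℝ)^(2*n))) := by ring
    _ ≤ (1/2:ℝ) * ∑ j : Fin n, (∑ x : Fin (2*n) → Fin n, (if ((j:ℕ) < m ∧
        ¬∃ z : ℤ, (1/2 : ℝ) * (cnt x j : ℝ) - d j = (z:ℝ)) then (1:ℝ) else 0)) := by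
        apply mul_le_mul_of_nonneg_left _ h12
        exact le_trans hlow hsub

lemma ff_bdd (n m : ℕ) (d : Fin n → ℝ) :
    ∀ (i : Fin (2*n)) (x y : Fin (2*n) → Fin n),
      (∀ j, j ≠ i → x j = y j) → ff n m d x - ff n m d y ≤ 1 := by
  intro i x y hxy
  set P : (Fin (2*n) → Fin n) → Fin n → Prop := fun x j => (j:ℕ) < m ∧
    ¬∃ z : ℤ, (1/2 : ℝ) * (cnt x j : ℝ) - d j = (z:ℝ) with hP
  have hsub : Finset.univ.filter (P x) ⊆
      insert (x i) (insert (y i) (Finset.univ.filter (P y))) := by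
    intro j hj
    rw [Finset.mem_filter] at hj
    by_cases h1 : j = x i
    · exact Finset.mem_insert.mpr (Or.inl h1)
    by_cases h2 : j = y i
    · exact Finset.mem_insert.mpr (Or.inr (Finset.mem_insert.mpr (Or.inl h2)))
    have hcnt : cnt x j = cnt y j := by
      unfold cnt
      congr 1
      refine Finset.filter_congr fun i' _ => ?_
      by_cases hii : i' = i
      · subst hii
        constructor
        · intro h; exact absurd h.symm h1
        · intro h; exact absurd h.symm h2
      · rw [hxy i' hii]
    refine Finset.mem_insert.mpr (Or.inr (Finset.mem_insert.mpr (Or.inr ?_)))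
    rw [Finset.mem_filter]
    refine ⟨Finset.mem_univ _, hj.2.1, ?_⟩
    rw [← hcnt]
    exact hj.2.2
  have hcard : (Finset.univ.filter (P x)).card ≤ (Finset.univ.filter (P y)).card + 2 := by
    calc (Finset.univ.filter (P x)).card
        ≤ (insert (x i) (insert (y i) (Finset.univ.filter (P y)))).card :=
          Finset.card_le_card hsub
      _ ≤ (insert (y i) (Finset.univ.filter (P y))).card + 1 := Finset.card_insert_le _ _
      _ ≤ (Finset.univ.filter (P y)).card + 1 + 1 :=
          Nat.add_le_add_right (Finset.card_insert_le _ _) 1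
      _ = (Finset.univ.filter (P y)).card + 2 := by ring
  have : ((Finset.univ.filter (P x)).card : ℝ) ≤ ((Finset.univ.filter (P y)).card : ℝ) + 2 := by
    exact_mod_cast hcard
  rw [ff, ff]
  show (1/2:ℝ) * ((Finset.univ.filter (P x)).card : ℝ)
      - (1/2:ℝ) * ((Finset.univ.filter (P y)).card : ℝ) ≤ 1
  linarith

lemma main_count (n m : ℕ) (hn : 2 ≤ n) (hm1 : 1 ≤ m) (hmn : m ≤ n) (d : Fin n → ℝ) :
    ((Finset.univ.filter (fun x : Fin (2*n) → Fin n => ff n m d x < (m:ℝ)/64)).card : ℝ)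
      ≤ (n:ℝ)^(2*n) * exp (-(m:ℝ)^2/(4096*n)) := by
  haveI : Nonempty (Fin n) := ⟨⟨0, by omega⟩⟩
  have hn0 : (0:ℝ) < n := by positivity
  have hm0 : (0:ℝ) < m := by exact_mod_cast hm1
  set t : ℝ := (m:ℝ)/(16*n) with htdef
  have ht0 : 0 ≤ t := by positivity
  have ht1 : |(-t)| ≤ 1 := by
    rw [abs_neg, abs_of_nonneg ht0, htdef]
    rw [div_le_one (by positivity)]
    have : (m:ℝ) ≤ n := by exact_mod_cast hmn
    linarith
  set N : ℝ := (n:ℝ)^(2*n) with hN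
  have hNpos : 0 < N := by positivity
  have hmgf := mcdiarmid_mgf (-t) ht1 (2*n) (ff n m d) (ff_bdd n m d)
  rw [Fintype.card_fin] at hmgf
  set Ebar : ℝ := (∑ x : Fin (2*n) → Fin n, ff n m d x) / N with hEbar
  have hEbar_ge : (31:ℝ)/128 * m ≤ Ebar := by
    rw [hEbar, le_div_iff₀ hNpos]
    have := mean_ge n m hn hmn d
    linarith
  set T := Finset.univ.filter (fun x : Fin (2*n) → Fin n => ff n m d x < (m:ℝ)/64) with hT
  have step1 : (T.card : ℝ) * exp (-t * ((m:ℝ)/64)) ≤ ∑ x : Fin (2*n) → Fin n,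
      exp (-t * ff n m d x) := by
    calc (T.card : ℝ) * exp (-t * ((m:ℝ)/64)) = ∑ _x ∈ T, exp (-t * ((m:ℝ)/64)) := by
          rw [Finset.sum_const, nsmul_eq_mul]
      _ ≤ ∑ x ∈ T, exp (-t * ff n m d x) := by
          refine Finset.sum_le_sum fun x hx => ?_
          rw [hT, Finset.mem_filter] at hx
          apply Real.exp_le_exp.mpr
          nlinarith [hx.2]
      _ ≤ ∑ x : Fin (2*n) → Fin n, exp (-t * ff n m d x) :=
          Finset.sum_le_sum_of_subset_of_nonneg (Finset.subset_univ _)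
            (fun x _ _ => Real.exp_nonneg _)
  have step2 : (T.card : ℝ) ≤ N * exp (-t * Ebar + t^2 * (2*n) + t * ((m:ℝ)/64)) := by
    have hexp : (0:ℝ) < exp (-t * ((m:ℝ)/64)) := Real.exp_pos _
    have h2 : (T.card : ℝ) * exp (-t * ((m:ℝ)/64)) ≤
        N * exp (-t * Ebar + t^2 * (2*n)) := by
      refine le_trans step1 (le_trans hmgf (le_of_eq ?_))
      rw [hN]
      congr 2
      push_cast
      ring
    have := mul_le_mul_of_nonneg_right h2 (le_of_lt (Real.exp_pos (t * ((m:ℝ)/64))))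
    rw [mul_assoc, ← Real.exp_add, mul_assoc, ← Real.exp_add] at this
    simpa using this
  refine le_trans step2 ?_
  apply mul_le_mul_of_nonneg_left _ (le_of_lt hNpos)
  apply Real.exp_le_exp.mpr
  have hE1 : -t * Ebar ≤ -t * ((31:ℝ)/128 * m) := by nlinarith [hEbar_ge, ht0]
  have heq : -(((m:ℝ)/(16*n))) * ((31:ℝ)/128 * (m:ℝ)) + ((m:ℝ)/(16*n))^2*(2*(n:ℝ))
      + ((m:ℝ)/(16*n))*((m:ℝ)/64) = -(13*(m:ℝ)^2/(2048*(n:ℝ))) := by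
    field_simp
    ring
  have hcmp : (m:ℝ)^2/(4096*n) ≤ 13*(m:ℝ)^2/(2048*n) := by
    rw [div_le_div_iff₀ (by positivity) (by positivity)]
    nlinarith [sq_nonneg (m:ℝ), hn0]
  have hfin : -(((m:ℝ))^2)/(4096*(n:ℝ)) = -((m:ℝ)^2/(4096*(n:ℝ))) := by ring
  rw [htdef] at hE1 ⊢
  rw [hfin]
  have : -(((m:ℝ)/(16*n))) * ((31:ℝ)/128 * (m:ℝ)) + ((m:ℝ)/(16*n))^2*(2*(n:ℝ))
      + ((m:ℝ)/(16*n))*((m:ℝ)/64) ≤ -((m:ℝ)^2/(4096*(n:ℝ))) := by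
    rw [heq]
    linarith
  push_cast
  linarith [hE1, this]

/-- Concentration step for the fuzzing algorithm: `A 1, …, A (2n)` are independent uniform
choices of cups, `a j = (1/2)·#{i : A i = j}` is the water received by cup `j`, and
`F = (1/2)·#{j < m : a j − d j ∉ ℤ}`. Then `P(F < m/64) ≤ exp(−m²/(4096n))`. -/
theorem stmt_15 {Ω : Type*} [MeasurableSpace Ω] (μ : Measure Ω) [IsProbabilityMeasure μ]
    (n m : ℕ) (hn : 2 ≤ n) (hm1 : 1 ≤ m) (hmn : m ≤ n)
    (A : Fin (2 * n) → Ω → Fin n) (hmeas : ∀ i, Measurable (A i))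
    (hindep : iIndepFun A μ)
    (hunif : ∀ i x, μ {ω | A i ω = x} = (n : ENNReal)⁻¹)
    (d : Fin n → ℝ) :
    μ {ω | (1 / 2 : ℝ) * (Set.ncard {j : Fin n | (j : ℕ) < m ∧
          ¬∃ z : ℤ, (1 / 2 : ℝ) * (Set.ncard {i : Fin (2 * n) | A i ω = j} : ℝ) - d j = (z : ℝ)}) <
        (m : ℝ) / 64} ≤ ENNReal.ofReal (Real.exp (-(m : ℝ) ^ 2 / (4096 * n))) := by
  have hn0 : (0:ℝ) < n := by positivity
  -- rewrite the event in terms of ff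
  have key : ∀ ω, (1 / 2 : ℝ) * (Set.ncard {j : Fin n | (j : ℕ) < m ∧
      ¬∃ z : ℤ, (1 / 2 : ℝ) * (Set.ncard {i : Fin (2 * n) | A i ω = j} : ℝ) - d j = (z : ℝ)})
      = ff n m d (fun i => A i ω) := by
    intro ω
    have h1 : ∀ j : Fin n, Set.ncard {i : Fin (2 * n) | A i ω = j}
        = cnt (fun i => A i ω) j := by
      intro j
      rw [cnt]
      rw [show {i : Fin (2 * n) | A i ω = j}
        = ↑(Finset.univ.filter (fun i : Fin (2*n) => A i ω = j)) by ext i; simp]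
      rw [Set.ncard_coe_finset]
    have h2 : {j : Fin n | (j : ℕ) < m ∧
        ¬∃ z : ℤ, (1 / 2 : ℝ) * (Set.ncard {i : Fin (2 * n) | A i ω = j} : ℝ) - d j = (z : ℝ)}
        = ↑(Finset.univ.filter (fun j : Fin n => (j:ℕ) < m ∧
          ¬∃ z : ℤ, (1/2 : ℝ) * (cnt (fun i => A i ω) j : ℝ) - d j = (z:ℝ))) := by
      ext j
      simp only [Set.mem_setOf_eq, Finset.coe_filter, Finset.mem_univ, true_and, h1]
    rw [h2, Set.ncard_coe_finset, ff]
  set T := Finset.univ.filter (fun x : Fin (2*n) → Fin n => ff n m d x < (m:ℝ)/64) with hT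
  set S : (Fin (2*n) → Fin n) → Set Ω := fun x => ⋂ i, A i ⁻¹' {x i} with hS
  have hev : {ω | (1 / 2 : ℝ) * (Set.ncard {j : Fin n | (j : ℕ) < m ∧
      ¬∃ z : ℤ, (1 / 2 : ℝ) * (Set.ncard {i : Fin (2 * n) | A i ω = j} : ℝ) - d j = (z : ℝ)}) <
      (m : ℝ) / 64} = ⋃ x ∈ T, S x := by
    ext ω
    simp only [Set.mem_setOf_eq, key, Set.mem_iUnion, hS, Set.mem_iInter, Set.mem_preimage,
      Set.mem_singleton_iff]
    constructor
    · intro h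
      exact ⟨fun i => A i ω, by rw [hT]; exact Finset.mem_filter.mpr ⟨Finset.mem_univ _, h⟩,
        fun i => rfl⟩
    · rintro ⟨x, hxT, hx⟩
      have : (fun i => A i ω) = x := funext hx
      rw [this]
      rw [hT] at hxT
      exact (Finset.mem_filter.mp hxT).2
  rw [hev]
  have hSmeas : ∀ x : Fin (2*n) → Fin n, MeasurableSet (S x) := by
    intro x
    exact MeasurableSet.iInter fun i => hmeas i (measurableSet_singleton _)
  have hdisj : (↑T : Set (Fin (2*n) → Fin n)).PairwiseDisjoint S := by
    intro x _ y _ hxy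
    rw [Function.onFun, Set.disjoint_left]
    intro ω hωx hωy
    apply hxy
    funext i
    have h1 : A i ω = x i := by
      have := Set.mem_iInter.mp hωx i; simpa using this
    have h2 : A i ω = y i := by
      have := Set.mem_iInter.mp hωy i; simpa using this
    rw [← h1, h2]
  rw [measure_biUnion_finset hdisj (fun x _ => hSmeas x)]
  have hprod : ∀ x : Fin (2*n) → Fin n, μ (S x) = ((n:ENNReal)⁻¹) ^ (2*n) := by
    intro x
    rw [hS]
    rw [hindep.meas_iInter (fun i => ⟨{x i}, measurableSet_singleton _, rfl⟩)]
    have : ∀ i : Fin (2*n), μ (A i ⁻¹' {x i}) = (n:ENNReal)⁻¹ := by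
      intro i
      rw [show A i ⁻¹' {x i} = {ω | A i ω = x i} by ext ω; simp]
      exact hunif i (x i)
    simp_rw [this]
    rw [Finset.prod_const, Finset.card_univ, Fintype.card_fin]
  simp_rw [hprod]
  rw [Finset.sum_const, nsmul_eq_mul]
  -- now convert to real
  have hfinal : (T.card : ℝ) * ((n:ℝ)⁻¹) ^ (2*n) ≤ Real.exp (-(m : ℝ) ^ 2 / (4096 * n)) := by
    have hc := main_count n m hn hm1 hmn d
    rw [← hT] at hc
    have hNpos : (0:ℝ) < (n:ℝ) ^ (2*n) := by positivity
    rw [inv_pow, ← div_eq_mul_inv, div_le_iff₀ hNpos]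
    calc (T.card : ℝ) ≤ (n:ℝ)^(2*n) * Real.exp (-(m:ℝ)^2/(4096*n)) := hc
      _ = Real.exp (-(m:ℝ)^2 / (4096 * n)) * (n:ℝ)^(2*n) := by ring
  calc (T.card : ENNReal) * ((n:ENNReal)⁻¹) ^ (2*n)
      = ENNReal.ofReal ((T.card : ℝ) * ((n:ℝ)⁻¹) ^ (2*n)) := by
        rw [ENNReal.ofReal_mul (by positivity), ENNReal.ofReal_pow (by positivity),
          ENNReal.ofReal_inv_of_pos hn0, ENNReal.ofReal_natCast, ENNReal.ofReal_natCast]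
    _ ≤ ENNReal.ofReal (Real.exp (-(m : ℝ) ^ 2 / (4096 * n))) :=
        ENNReal.ofReal_le_ofReal hfinal
end
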